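/- arXiv:2205.07445 — 4 statements merged into one kernel-verified Lean document; each statement's English description precedes it below -/
import Mathlib

section
/- Let N be a positive integer, let z, w : ZMod N → ℂ be signals (indices taken modulo N), let L be an integer with 0 < L < N, and let k, m be integers. Set ω = exp(2πi·L/N). Then the short-time Fourier transform measurement admits the frequency-domain representation: Σ_{n=0}^{N−1} z_n · w_{mL−n} · exp(−2πi·k·n/N) = (1/N) · Σ_{l=0}^{N−1} ẑ_{k+l} · ŵ_l · ω^{l·m}, where all subscripts of z, w, ẑ, ŵ are taken modulo N. -/
open Complex

/-- Discrete Fourier transform of a signal indexed by `ZMod N`. -/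
noncomputable def dft {N : ℕ} (z : ZMod N → ℂ) (k : ZMod N) : ℂ :=
  ∑ n ∈ Finset.range N, z n *
    Complex.exp (-2 * (Real.pi : ℂ) * Complex.I * (k.val : ℂ) * (n : ℂ) / N)

/-- Short-time Fourier transform measurement `ŷ^w_{k,m}(z)` with window `w` and
separation parameter `L`. -/
noncomputable def stft {N : ℕ} (w : ZMod N → ℂ) (L : ℤ) (z : ZMod N → ℂ) (k m : ℤ) : ℂ :=
  ∑ n ∈ Finset.range N, z n * w ((m * L - n : ℤ) : ZMod N) *
    Complex.exp (-2 * (Real.pi : ℂ) * Complex.I * (k : ℂ) * (n : ℂ) / N)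

/-- The DFT of the analytic signal associated with a real signal `x`. -/
noncomputable def analyticHat (N : ℕ) (x : ZMod N → ℝ) (k : ℕ) : ℂ :=
  if N % 2 = 0 then
    if k = 0 then dft (fun n => (x n : ℂ)) 0
    else if k ≤ N / 2 - 1 then 2 * dft (fun n => (x n : ℂ)) (k : ZMod N)
    else if k = N / 2 then dft (fun n => (x n : ℂ)) ((N / 2 : ℕ) : ZMod N)
    else 0
  else
    if k = 0 then dft (fun n => (x n : ℂ)) 0
    else if k ≤ (N - 1) / 2 then 2 * dft (fun n => (x n : ℂ)) (k : ZMod N)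
    else 0

/-- The analytic signal `A(x)` of a real signal `x`, obtained by inverse DFT. -/
noncomputable def analyticSignal {N : ℕ} (x : ZMod N → ℝ) : ZMod N → ℂ :=
  fun n => (1 / N : ℂ) * ∑ k ∈ Finset.range N, analyticHat N x k *
    Complex.exp (2 * (Real.pi : ℂ) * Complex.I * (k : ℂ) * (n.val : ℂ) / N)

/-- A signal `z ∈ ℂ^N` is analytic if `z = A(x)` for some real signal `x`. -/
def IsAnalytic {N : ℕ} (z : ZMod N → ℂ) : Prop := ∃ x : ZMod N → ℝ, z = analyticSignal x

noncomputable def ee (N : ℕ) (a : ℤ) : ℂ :=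
  Complex.exp (2 * (Real.pi : ℂ) * Complex.I * (a : ℂ) / N)

lemma ee_add (N : ℕ) (a b : ℤ) : ee N (a + b) = ee N a * ee N b := by
  unfold ee
  rw [← Complex.exp_add]
  congr 1
  push_cast
  ring

lemma ee_zero (N : ℕ) : ee N 0 = 1 := by simp [ee]

lemma ee_nmul (N : ℕ) (t : ℤ) : ee N (N * t) = 1 := by
  rcases Nat.eq_zero_or_pos N with h | h
  · subst h; simp [ee]
  have hN : (N : ℂ) ≠ 0 := by exact_mod_cast h.ne'
  unfold ee
  have : (2 * (Real.pi : ℂ) * Complex.I * ((N * t : ℤ) : ℂ) / N)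
      = t * (2 * Real.pi * Complex.I) := by
    push_cast
    field_simp
  rw [this, Complex.exp_int_mul_two_pi_mul_I]

lemma ee_dvd_sub {N : ℕ} {a b : ℤ} (h : (N : ℤ) ∣ a - b) : ee N a = ee N b := by
  obtain ⟨t, ht⟩ := h
  have : a = b + N * t := by linarith
  rw [this, ee_add, ee_nmul, mul_one]

lemma ee_one_iff {N : ℕ} (hN : 0 < N) (a : ℤ) : ee N a = 1 ↔ (N : ℤ) ∣ a := by
  constructor
  · intro h
    rw [ee, Complex.exp_eq_one_iff] at h
    obtain ⟨n, hn⟩ := h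
    have hNc : (N : ℂ) ≠ 0 := by exact_mod_cast hN.ne'
    have hpi : (Real.pi : ℂ) ≠ 0 := by exact_mod_cast Real.pi_ne_zero
    have : (a : ℂ) = n * N := by
      field_simp at hn
      have h2 : (2 * (Real.pi : ℂ) * Complex.I) * (a : ℂ)
          = (2 * (Real.pi : ℂ) * Complex.I) * ((n : ℂ) * N) := by
        linear_combination (2 * (Real.pi : ℂ) * Complex.I) * hn
      have hne : (2 * (Real.pi : ℂ) * Complex.I) ≠ 0 := by
        simp [hpi, Complex.I_ne_zero]
      exact mul_left_cancel₀ hne h2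
    have : a = n * N := by exact_mod_cast this
    exact ⟨n, by linarith⟩
  · intro h
    have := ee_dvd_sub (N := N) (a := a) (b := 0) (by simpa using h)
    simpa [ee_zero] using this

lemma ee_pow (N : ℕ) (a : ℤ) (t : ℕ) : ee N a ^ t = ee N (a * t) := by
  unfold ee
  rw [← Complex.exp_nat_mul]
  congr 1
  push_cast
  ring

lemma ee_zpow (N : ℕ) (a : ℤ) (t : ℤ) : ee N a ^ t = ee N (a * t) := by
  unfold ee
  rw [← Complex.exp_int_mul]
  congr 1
  push_cast
  ring

lemma sum_ee {N : ℕ} (hN : 0 < N) (a : ℤ) :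
    ∑ l ∈ Finset.range N, ee N (l * a) = if (N : ℤ) ∣ a then (N : ℂ) else 0 := by
  have h1 : ∀ l ∈ Finset.range N, ee N (l * a) = ee N a ^ l := by
    intro l _
    rw [ee_pow]
    congr 1
    ring
  rw [Finset.sum_congr rfl h1]
  by_cases h : (N : ℤ) ∣ a
  · rw [if_pos h]
    have : ee N a = 1 := (ee_one_iff hN a).mpr h
    simp [this]
  · rw [if_neg h]
    have hx : ee N a ≠ 1 := fun hc => h ((ee_one_iff hN a).mp hc)
    rw [geom_sum_eq hx]
    have : ee N a ^ N = 1 := by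
      rw [ee_pow, (ee_one_iff hN _)]
      exact ⟨a, (mul_comm a (N : ℤ))⟩
    simp [this]

lemma key_sum {N : ℕ} (hN : 0 < N) (w : ZMod N → ℂ) (c : ℤ) :
    ∑ p ∈ Finset.range N, w (p : ZMod N) * (if (N : ℤ) ∣ c - p then (1 : ℂ) else 0)
      = w ((c : ℤ) : ZMod N) := by
  haveI : NeZero N := ⟨hN.ne'⟩
  set p0 : ℕ := ((c : ZMod N)).val with hp0
  have hp0mem : p0 ∈ Finset.range N := Finset.mem_range.mpr (ZMod.val_lt _)
  rw [Finset.sum_eq_single_of_mem p0 hp0mem]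
  · have hdvd : (N : ℤ) ∣ c - p0 := by
      rw [← ZMod.intCast_zmod_eq_zero_iff_dvd]
      push_cast
      simp [hp0, ZMod.natCast_val, ZMod.intCast_cast, ZMod.cast_id]
    rw [if_pos hdvd, mul_one]
    congr 1
    simp [hp0, ZMod.natCast_val, ZMod.cast_id]
  · intro p hp hne
    rw [if_neg, mul_zero]
    intro hdvd
    apply hne
    have : ((c - p : ℤ) : ZMod N) = 0 := (ZMod.intCast_zmod_eq_zero_iff_dvd _ _).mpr hdvd
    have hcp : ((p : ℕ) : ZMod N) = ((c : ℤ) : ZMod N) := by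
      push_cast at this ⊢
      linear_combination -this
    have := congrArg ZMod.val hcp
    rwa [ZMod.val_natCast_of_lt (Finset.mem_range.mp hp)] at this

lemma dft_intCast {N : ℕ} (hN : 0 < N) (z : ZMod N → ℂ) (y : ℤ) :
    dft z ((y : ZMod N)) = ∑ n ∈ Finset.range N, z n * ee N (-y * n) := by
  haveI : NeZero N := ⟨hN.ne'⟩
  unfold dft
  refine Finset.sum_congr rfl fun n _ => ?_
  congr 1
  have h1 : Complex.exp (-2 * (Real.pi : ℂ) * Complex.I * ((((y : ZMod N)).val : ℕ) : ℂ) * (n : ℂ) / N)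
      = ee N (-(((y : ZMod N)).val : ℤ) * n) := by
    unfold ee
    congr 1
    push_cast
    ring
  rw [h1]
  apply ee_dvd_sub
  have hdvd : (N : ℤ) ∣ (y - (((y : ZMod N)).val : ℤ)) := by
    rw [← ZMod.intCast_zmod_eq_zero_iff_dvd]
    push_cast
    simp [ZMod.natCast_val, ZMod.intCast_cast, ZMod.cast_id]
  have : (-(((y : ZMod N)).val : ℤ) * n) - (-y * n) = (y - (((y : ZMod N)).val : ℤ)) * n := by ring
  rw [this]
  exact Dvd.dvd.mul_right hdvd n

/-- frequency-domain representation of the STFT measurement. -/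
theorem stft_frequency_domain (N : ℕ) (hN : 0 < N) (z w : ZMod N → ℂ)
    (L : ℤ) (hL0 : 0 < L) (hLN : L < (N : ℤ)) (k m : ℤ) :
    stft w L z k m = (1 / N : ℂ) * ∑ l ∈ Finset.range N,
      dft z ((k : ZMod N) + (l : ZMod N)) * dft w (l : ZMod N) *
        Complex.exp (2 * (Real.pi : ℂ) * Complex.I * (L : ℂ) / N) ^ ((l : ℤ) * m) := by
  haveI : NeZero N := ⟨hN.ne'⟩
  have hNc : (N : ℂ) ≠ 0 := by exact_mod_cast hN.ne'
  -- step 1: rewrite each factor of the RHS summand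
  have hd1 : ∀ l : ℕ, dft z ((k : ZMod N) + (l : ZMod N))
      = ∑ n ∈ Finset.range N, z n * ee N (-(k + l) * n) := by
    intro l
    have hcast : ((k + l : ℤ) : ZMod N) = (k : ZMod N) + (l : ZMod N) := by push_cast; ring
    rw [← hcast, dft_intCast hN]
  have hd2 : ∀ l : ℕ, dft w ((l : ZMod N))
      = ∑ p ∈ Finset.range N, w p * ee N (-(l : ℤ) * p) := by
    intro l
    have hcast : (((l : ℤ)) : ZMod N) = ((l : ℕ) : ZMod N) := by push_cast; ring
    rw [← hcast, dft_intCast hN]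
  have hω : Complex.exp (2 * (Real.pi : ℂ) * Complex.I * (L : ℂ) / N) = ee N L := rfl
  -- step 2: the RHS summand as a double sum
  have hterm : ∀ l ∈ Finset.range N,
      dft z ((k : ZMod N) + (l : ZMod N)) * dft w (l : ZMod N) *
        Complex.exp (2 * (Real.pi : ℂ) * Complex.I * (L : ℂ) / N) ^ ((l : ℤ) * m)
      = ∑ n ∈ Finset.range N, ∑ p ∈ Finset.range N,
          z n * w p * ee N (-k * n) * ee N ((l : ℤ) * (L * m - n - p)) := by
    intro l _
    rw [hd1 l, hd2 l, hω, ee_zpow, Finset.sum_mul_sum, Finset.sum_mul]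
    refine Finset.sum_congr rfl fun n _ => ?_
    rw [Finset.sum_mul]
    refine Finset.sum_congr rfl fun p _ => ?_
    have hE : ee N (-(k + l) * n) * ee N (-(l : ℤ) * p) * ee N (L * ((l : ℤ) * m))
        = ee N (-k * n) * ee N ((l : ℤ) * (L * m - n - p)) := by
      rw [← ee_add, ← ee_add, ← ee_add]
      congr 1
      ring
    calc z n * ee N (-(k + l) * n) * (w p * ee N (-(l : ℤ) * p)) * ee N (L * ((l : ℤ) * m))
        = z n * w p * (ee N (-(k + l) * n) * ee N (-(l : ℤ) * p) * ee N (L * ((l : ℤ) * m))) := by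
          ring
      _ = z n * w p * (ee N (-k * n) * ee N ((l : ℤ) * (L * m - n - p))) := by rw [hE]
      _ = z n * w p * ee N (-k * n) * ee N ((l : ℤ) * (L * m - n - p)) := by ring
  rw [Finset.sum_congr rfl hterm]
  -- step 3: swap summation order and evaluate the inner geometric sum
  rw [Finset.sum_comm]
  have hswap : ∀ n ∈ Finset.range N,
      ∑ l ∈ Finset.range N, ∑ p ∈ Finset.range N,
          z n * w p * ee N (-k * n) * ee N ((l : ℤ) * (L * m - n - p))
      = ∑ p ∈ Finset.range N,
          z n * w p * ee N (-k * n) * (if (N : ℤ) ∣ (L * m - n - p) then (N : ℂ) else 0) := by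
    intro n _
    rw [Finset.sum_comm]
    refine Finset.sum_congr rfl fun p _ => ?_
    rw [← Finset.mul_sum, sum_ee hN]
  rw [Finset.sum_congr rfl hswap]
  -- step 4: finish
  rw [Finset.mul_sum]
  unfold stft
  refine Finset.sum_congr rfl fun n hn => ?_
  rw [Finset.mul_sum]
  have hstep : ∀ p ∈ Finset.range N,
      (1 / N : ℂ) * (z n * w p * ee N (-k * n) * (if (N : ℤ) ∣ (L * m - n - p) then (N : ℂ) else 0))
      = (z n * ee N (-k * n)) * (w (p : ZMod N) * (if (N : ℤ) ∣ (L * m - n) - p then (1 : ℂ) else 0)) := by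
    intro p _
    have harg : (L * m - n - p : ℤ) = (L * m - n) - p := by ring
    rw [harg]
    split_ifs with h
    · field_simp
    · simp
  rw [Finset.sum_congr rfl hstep, ← Finset.mul_sum, key_sum hN w (L * m - n)]
  have hwarg : ((L * m - n : ℤ) : ZMod N) = ((m * L - n : ℤ) : ZMod N) := by
    congr 1
    ring
  have hexp : Complex.exp (-2 * (Real.pi : ℂ) * Complex.I * (k : ℂ) * (n : ℂ) / N)
      = ee N (-k * n) := by
    unfold ee
    congr 1
    push_cast
    ring
  rw [hwarg, hexp]
  ring
end

section
/- Let N be a positive even integer and let B be an integer with 2 ≤ B ≤ N/2. Let w ∈ ℂ^N be a window and i an integer such that the DFT of w satisfies ŵ_{(i+t) mod N} = 0 for all t = 0, …, N − B − 1 and ŵ_{(i+N−B) mod N} ≠ 0. Let 0 < L < N be a separation parameter and let z ∈ ℂ^N be any analytic signal. Then N·|ŷ^w_{k0, 0}(z)| = |ẑ_{N/2}|·|ŵ_{(i+N−B) mod N}|, where k0 = (N/2 − (i + N − B)) mod N; consequently ẑ_{N/2} is real and there exists ε ∈ {1, −1} with ẑ_{N/2} = ε·N·|ŷ^w_{k0,0}(z)|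 / |ŵ_{(i+N−B) mod N}|, i.e., ẑ_{N/2} is determined up to a sign by this single STFT measurement. -/
open Complex

open Finset




noncomputable def E (N : ℕ) (a : ℤ) : ℂ :=
  Complex.exp (2 * (Real.pi : ℂ) * Complex.I * (a : ℂ) / N)

lemma E_eq_of_dvd {N : ℕ} (hN : 0 < N) {a b : ℤ} (h : (N : ℤ) ∣ a - b) :
    E N a = E N b := by
  obtain ⟨q, hq⟩ := h
  have hNC : (N : ℂ) ≠ 0 := Nat.cast_ne_zero.2 hN.ne'
  have ha : (a : ℂ) = (b : ℂ) + N * q := by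
    have : a = b + N * q := by linarith
    exact_mod_cast congrArg (Int.cast : ℤ → ℂ) this
  unfold E
  rw [ha]
  have h2 : 2 * (Real.pi : ℂ) * Complex.I * ((b : ℂ) + N * q) / N
      = 2 * (Real.pi : ℂ) * Complex.I * (b : ℂ) / N + q * (2 * Real.pi * Complex.I) := by
    field_simp
  rw [h2, Complex.exp_add, Complex.exp_int_mul_two_pi_mul_I, mul_one]

lemma E_eq_one {N : ℕ} {q : ℤ} (hN : 0 < N) (h : (N : ℤ) ∣ q) : E N q = 1 := by
  have := E_eq_of_dvd hN (b := 0) (by simpa using h)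
  simpa [E] using this

lemma sum_E {N : ℕ} (hN : 0 < N) (m : ℤ) :
    ∑ n ∈ Finset.range N, E N (m * n) = if (N : ℤ) ∣ m then (N : ℂ) else 0 := by
  have hNC : (N : ℂ) ≠ 0 := Nat.cast_ne_zero.2 hN.ne'
  have hterm : ∀ n : ℕ, E N (m * n) = (E N m) ^ n := by
    intro n
    unfold E
    rw [← Complex.exp_nat_mul]
    congr 1
    push_cast
    ring
  rw [Finset.sum_congr rfl fun n _ => hterm n]
  by_cases hdvd : (N : ℤ) ∣ m
  · rw [E_eq_one hN hdvd]
    simp [hdvd]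
  · have hu1 : E N m ≠ 1 := by
      intro h1
      unfold E at h1
      rw [Complex.exp_eq_one_iff] at h1
      obtain ⟨k, hk⟩ := h1
      apply hdvd
      have hπ : (Real.pi : ℂ) ≠ 0 := by exact_mod_cast Real.pi_ne_zero
      have hI : Complex.I ≠ 0 := Complex.I_ne_zero
      have h2pi : (2 * (Real.pi : ℂ) * Complex.I) ≠ 0 := by
        apply mul_ne_zero (mul_ne_zero two_ne_zero _) hI
        exact_mod_cast Real.pi_ne_zero
      have hm : (m : ℂ) = k * N := by
        field_simp at hk
        have h2 : (2 * (Real.pi : ℂ) * Complex.I) * (m : ℂ)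
            = (2 * (Real.pi : ℂ) * Complex.I) * ((k : ℂ) * N) := by linear_combination (2 * (Real.pi : ℂ) * Complex.I) * hk
        exact mul_left_cancel₀ h2pi h2
      exact Dvd.intro_left k (by exact_mod_cast hm.symm)
    have hupow : (E N m) ^ N = 1 := by
      unfold E
      rw [← Complex.exp_nat_mul]
      have : (N : ℂ) * (2 * (Real.pi : ℂ) * Complex.I * (m : ℂ) / N) = m * (2 * Real.pi * Complex.I) := by
        field_simp
      rw [this, Complex.exp_int_mul_two_pi_mul_I]
    rw [geom_sum_eq hu1, hupow]
    simp [hdvd]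

lemma val_int_modEq {N : ℕ} [NeZero N] (m : ℤ) :
    (((m : ZMod N).val : ℤ)) ≡ m [ZMOD N] := by
  have : (((m : ZMod N).val : ℤ) : ZMod N) = (m : ZMod N) := by
    push_cast; simp [ZMod.natCast_val]
  rwa [ZMod.intCast_eq_intCast_iff'] at this

lemma dft_int {N : ℕ} (hN : 0 < N) (w : ZMod N → ℂ) (m : ℤ) :
    dft w ((m : ℤ) : ZMod N) = ∑ n ∈ Finset.range N, w n * E N (-(m * n)) := by
  haveI : NeZero N := ⟨hN.ne'⟩
  unfold dft
  refine Finset.sum_congr rfl fun n _ => ?_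
  congr 1
  have h1 : Complex.exp (-2 * (Real.pi : ℂ) * Complex.I * (((m : ZMod N).val : ℕ) : ℂ) * (n : ℂ) / N)
      = E N (-((((m : ZMod N).val : ℤ)) * n)) := by
    unfold E; congr 1; push_cast; ring
  rw [h1]
  apply E_eq_of_dvd hN
  have hmod : (N : ℤ) ∣ m - (((m : ZMod N).val : ℤ)) := (val_int_modEq (N := N) m).dvd
  obtain ⟨q, hq⟩ := hmod
  exact ⟨q * n, by linear_combination (n : ℤ) * hq⟩

lemma sum_flip {N : ℕ} (hN : 0 < N) (w : ZMod N → ℂ) (m : ℤ) :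
    ∑ n ∈ Finset.range N, w (((-(n : ℤ)) : ℤ) : ZMod N) * E N (m * n)
      = ∑ n ∈ Finset.range N, w n * E N (-(m * n)) := by
  haveI : NeZero N := ⟨hN.ne'⟩
  refine Finset.sum_nbij' (fun n => (N - n) % N) (fun n => (N - n) % N) ?_ ?_ ?_ ?_ ?_
  · intro a ha; exact Finset.mem_range.2 (Nat.mod_lt _ hN)
  · intro a ha; exact Finset.mem_range.2 (Nat.mod_lt _ hN)
  · intro a ha
    rcases Nat.eq_zero_or_pos a with h0 | h0
    · simp [h0, Nat.mod_self]
    · have ha' : a < N := Finset.mem_range.1 ha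
      show (N - (N - a) % N) % N = a
      rw [Nat.mod_eq_of_lt (show N - a < N by omega)]
      rw [Nat.mod_eq_of_lt (by omega)]
      omega
  · intro a ha
    rcases Nat.eq_zero_or_pos a with h0 | h0
    · simp [h0, Nat.mod_self]
    · have ha' : a < N := Finset.mem_range.1 ha
      show (N - (N - a) % N) % N = a
      rw [Nat.mod_eq_of_lt (show N - a < N by omega)]
      rw [Nat.mod_eq_of_lt (by omega)]
      omega
  · intro a ha
    have ha' : a < N := Finset.mem_range.1 ha
    have harg : (((-(a : ℤ)) : ℤ) : ZMod N) = (((N - a) % N : ℕ) : ZMod N) := by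
      rw [ZMod.natCast_mod, Nat.cast_sub ha'.le, ZMod.natCast_self]
      push_cast
      ring
    rw [harg]
    congr 1
    apply E_eq_of_dvd hN
    have hsum : (N : ℤ) ∣ (a : ℤ) + ((N - a) % N : ℕ) := by
      rcases Nat.eq_zero_or_pos a with h0 | h0
      · simp [h0, Nat.mod_self]
      · have : (N - a) % N = N - a := Nat.mod_eq_of_lt (by omega)
        rw [this]
        exact ⟨1, by push_cast; omega⟩
    obtain ⟨q, hq⟩ := hsum
    exact ⟨m * q, by linear_combination (m : ℤ) * hq⟩

lemma int_eq_zero_of_abs_lt {a b : ℤ} (h : |a| < b) (h2 : b ∣ a) : a = 0 := by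
  rcases h2 with ⟨q, rfl⟩
  have hb : 0 < b := lt_of_le_of_lt (abs_nonneg _) h
  rcases lt_trichotomy q 0 with h0|h0|h0
  · have h1 : b * q ≤ b * (-1) := mul_le_mul_of_nonneg_left (by omega) hb.le
    have h2 := neg_abs_le (b * q)
    linarith
  · simp [h0]
  · have h1 : b * 1 ≤ b * q := mul_le_mul_of_nonneg_left (by omega) hb.le
    have h2 := le_abs_self (b * q)
    linarith

lemma E_add (N : ℕ) (a b : ℤ) : E N (a + b) = E N a * E N b := by
  unfold E
  rw [← Complex.exp_add]
  congr 1
  push_cast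
  ring

lemma key_sum_s9 {N : ℕ} (c v : ℕ → ℂ) (k : ℤ) :
    ∑ n ∈ Finset.range N, ((1 / N : ℂ) * ∑ j ∈ Finset.range N, c j * E N ((j : ℤ) * n)) * v n *
        E N (-(k * n))
      = (1 / N : ℂ) * ∑ j ∈ Finset.range N, c j *
          ∑ n ∈ Finset.range N, v n * E N (((j : ℤ) - k) * n) := by
  have h1 : ∀ n : ℕ,
      ((1 / N : ℂ) * ∑ j ∈ Finset.range N, c j * E N ((j : ℤ) * n)) * v n * E N (-(k * n))
        = ∑ j ∈ Finset.range N, (1 / N : ℂ) * (c j * (v n * E N (((j : ℤ) - k) * n))) := by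
    intro n
    rw [Finset.mul_sum, Finset.sum_mul, Finset.sum_mul]
    refine Finset.sum_congr rfl fun j _ => ?_
    have hE : E N (((j : ℤ) - k) * n) = E N ((j : ℤ) * n) * E N (-(k * n)) := by
      rw [← E_add]; congr 1; ring
    rw [hE]; ring
  rw [Finset.sum_congr rfl fun n _ => h1 n, Finset.sum_comm, Finset.mul_sum]
  refine Finset.sum_congr rfl fun j _ => ?_
  rw [Finset.mul_sum, Finset.mul_sum]

lemma analyticSignal_apply {N : ℕ} (x : ZMod N → ℝ) (n : ZMod N) :
    analyticSignal x n
      = (1 / N : ℂ) * ∑ j ∈ Finset.range N, analyticHat N x j * E N ((j : ℤ) * n.val) := by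
  unfold analyticSignal
  congr 1
  refine Finset.sum_congr rfl fun j _ => ?_
  congr 1
  unfold E
  congr 1
  push_cast
  ring

lemma dft_analyticSignal {N : ℕ} (hN : 0 < N) (x : ZMod N → ℝ) (k : ℕ) (hk : k < N) :
    dft (analyticSignal x) ((k : ℕ) : ZMod N) = analyticHat N x k := by
  haveI : NeZero N := ⟨hN.ne'⟩
  have hNC : (N : ℂ) ≠ 0 := Nat.cast_ne_zero.2 hN.ne'
  have hval : ((k : ZMod N)).val = k := ZMod.val_natCast_of_lt hk
  unfold dft
  have h1 : ∀ n ∈ Finset.range N,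
      analyticSignal x (n : ZMod N) *
          Complex.exp (-2 * (Real.pi : ℂ) * Complex.I * ((((k : ℕ) : ZMod N)).val : ℂ) * (n : ℂ) / N)
        = ((1 / N : ℂ) * ∑ j ∈ Finset.range N, analyticHat N x j * E N ((j : ℤ) * n)) * (1 : ℂ) *
            E N (-((k : ℤ) * n)) := by
    intro n hn
    rw [analyticSignal_apply, ZMod.val_natCast_of_lt (Finset.mem_range.1 hn), hval, mul_one]
    congr 1
    unfold E
    congr 1
    push_cast
    ring
  rw [Finset.sum_congr rfl h1, key_sum_s9]
  have h2 : ∀ j ∈ Finset.range N,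
      analyticHat N x j * ∑ n ∈ Finset.range N, (1 : ℂ) * E N (((j : ℤ) - k) * n)
        = analyticHat N x j * (if (N : ℤ) ∣ ((j : ℤ) - k) then (N : ℂ) else 0) := by
    intro j hj
    congr 1
    rw [← sum_E hN ((j : ℤ) - k)]
    exact Finset.sum_congr rfl fun n _ => one_mul _
  rw [Finset.sum_congr rfl h2]
  rw [Finset.sum_eq_single_of_mem k (Finset.mem_range.2 hk)]
  · rw [if_pos (by simp)]
    field_simp
  · intro j hj hjk
    have hjN : j < N := Finset.mem_range.1 hj
    rw [if_neg, mul_zero]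
    intro hdvd
    have : (j : ℤ) - k = 0 := int_eq_zero_of_abs_lt (by rw [abs_lt]; omega) hdvd
    omega

lemma analyticHat_high (N : ℕ) (hEven : N % 2 = 0) (x : ZMod N → ℝ) (j : ℕ)
    (hj1 : N / 2 < j) : analyticHat N x j = 0 := by
  unfold analyticHat
  rw [if_pos hEven, if_neg (by omega), if_neg (by omega), if_neg (by omega)]

lemma analyticHat_half (N : ℕ) (hEven : N % 2 = 0) (h2 : 2 ≤ N) (x : ZMod N → ℝ) :
    analyticHat N x (N / 2) = dft (fun n => (x n : ℂ)) ((N / 2 : ℕ) : ZMod N) := by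
  unfold analyticHat
  rw [if_pos hEven, if_neg (by omega), if_neg (by omega), if_pos rfl]

lemma dft_half_real (N : ℕ) (hN : 0 < N) (hEven : N % 2 = 0) (x : ZMod N → ℝ) :
    dft (fun n => (x n : ℂ)) ((N / 2 : ℕ) : ZMod N)
      = ((∑ n ∈ Finset.range N, x n * (-1) ^ n : ℝ) : ℂ) := by
  haveI : NeZero N := ⟨hN.ne'⟩
  have hNC : (N : ℂ) ≠ 0 := Nat.cast_ne_zero.2 hN.ne'
  have hhalf : N / 2 < N := by omega
  have hval : (((N / 2 : ℕ) : ZMod N)).val = N / 2 := ZMod.val_natCast_of_lt hhalf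
  have hhne : ((N / 2 : ℕ) : ℂ) ≠ 0 := by
    have : 0 < N / 2 := by omega
    exact_mod_cast Nat.cast_ne_zero.2 this.ne'
  have hNcast : (N : ℂ) = 2 * ((N / 2 : ℕ) : ℂ) := by
    have : N = 2 * (N / 2) := by omega
    exact_mod_cast congrArg (Nat.cast : ℕ → ℂ) this
  unfold dft
  rw [Complex.ofReal_sum]
  refine Finset.sum_congr rfl fun n _ => ?_
  rw [hval]
  have hexp : Complex.exp (-2 * (Real.pi : ℂ) * Complex.I * ((N / 2 : ℕ) : ℂ) * (n : ℂ) / N)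
      = (-1 : ℂ) ^ n := by
    have harg : -2 * (Real.pi : ℂ) * Complex.I * ((N / 2 : ℕ) : ℂ) * (n : ℂ) / N
        = (n : ℂ) * (-(Real.pi : ℂ) * Complex.I) := by
      rw [hNcast]
      field_simp
    rw [harg, Complex.exp_nat_mul]
    congr 1
    rw [show (-(Real.pi : ℂ) * Complex.I) = -((Real.pi : ℂ) * Complex.I) by ring,
      Complex.exp_neg, Complex.exp_pi_mul_I]
    norm_num
  rw [hexp]
  push_cast
  ring

/-- for even `N`, the component `ẑ_{N/2}` of an analytic signal is
determined up to a sign by a single STFT measurement. -/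
theorem recover_top_component_even (N : ℕ) (hN : 0 < N) (hEven : N % 2 = 0)
    (B : ℕ) (hB2 : 2 ≤ B) (hBle : B ≤ N / 2)
    (w : ZMod N → ℂ) (i : ℤ)
    (hzero : ∀ t : ℕ, (t : ℤ) ≤ (N : ℤ) - B - 1 → dft w ((i + t : ℤ) : ZMod N) = 0)
    (hwB : dft w ((i + N - B : ℤ) : ZMod N) ≠ 0)
    (L : ℤ) (hL0 : 0 < L) (hLN : L < (N : ℤ))
    (z : ZMod N → ℂ) (hz : IsAnalytic z) :
    (N : ℝ) * ‖stft w L z (((N / 2 : ℕ) : ℤ) - (i + N - B)) 0‖ =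
      ‖dft z ((N / 2 : ℕ) : ZMod N)‖ *
        ‖dft w ((i + N - B : ℤ) : ZMod N)‖ ∧
    (dft z ((N / 2 : ℕ) : ZMod N)).im = 0 ∧
    ∃ ε : ℝ, (ε = 1 ∨ ε = -1) ∧
      dft z ((N / 2 : ℕ) : ZMod N) =
        ((ε * N * ‖stft w L z (((N / 2 : ℕ) : ℤ) - (i + N - B)) 0‖ /
          ‖dft w ((i + N - B : ℤ) : ZMod N)‖ : ℝ) : ℂ) := by
  obtain ⟨x, rfl⟩ := hz
  haveI : NeZero N := ⟨hN.ne'⟩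
  have hN4 : 4 ≤ N := by omega
  have hNC : (N : ℂ) ≠ 0 := Nat.cast_ne_zero.2 hN.ne'
  have hhalf : N / 2 < N := by omega
  set r : ℝ := ∑ n ∈ Finset.range N, x n * (-1) ^ n with hr
  have hzhalf : dft (analyticSignal x) ((N / 2 : ℕ) : ZMod N) = (r : ℂ) := by
    rw [show ((N / 2 : ℕ) : ZMod N) = (((N / 2 : ℕ) : ℕ) : ZMod N) from rfl,
      dft_analyticSignal hN x (N / 2) hhalf, analyticHat_half N hEven (by omega) x,
      dft_half_real N hN hEven x]
  set k0 : ℤ := ((N / 2 : ℕ) : ℤ) - (i + N - B) with hk0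
  -- the key identity
  have hkey : (N : ℂ) * stft w L (analyticSignal x) k0 0
      = (r : ℂ) * dft w ((i + N - B : ℤ) : ZMod N) := by
    have hstep : stft w L (analyticSignal x) k0 0
        = (1 / N : ℂ) * ∑ j ∈ Finset.range N, analyticHat N x j *
            ∑ n ∈ Finset.range N, w (((-(n : ℤ)) : ℤ) : ZMod N) * E N (((j : ℤ) - k0) * n) := by
      rw [← key_sum_s9 (fun j => analyticHat N x j) (fun n => w (((-(n : ℤ)) : ℤ) : ZMod N)) k0]
      unfold stft
      refine Finset.sum_congr rfl fun n hn => ?_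
      rw [analyticSignal_apply, ZMod.val_natCast_of_lt (Finset.mem_range.1 hn)]
      have h0L : ((0 * L - (n : ℤ) : ℤ) : ZMod N) = (((-(n : ℤ)) : ℤ) : ZMod N) := by norm_num
      rw [h0L]
      congr 1
      unfold E
      congr 1
      push_cast
      ring
    have hinner : ∀ j : ℕ, (∑ n ∈ Finset.range N, w (((-(n : ℤ)) : ℤ) : ZMod N) *
        E N (((j : ℤ) - k0) * n)) = dft w (((j : ℤ) - k0 : ℤ) : ZMod N) := by
      intro j
      rw [sum_flip hN w ((j : ℤ) - k0), ← dft_int hN w ((j : ℤ) - k0)]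
    rw [hstep, Finset.sum_congr rfl fun j _ => by rw [hinner j]]
    rw [Finset.sum_eq_single_of_mem (N / 2) (Finset.mem_range.2 hhalf)]
    · have harg : (((N / 2 : ℕ) : ℤ) - k0 : ℤ) = i + N - B := by rw [hk0]; ring
      rw [harg, analyticHat_half N hEven (by omega) x, dft_half_real N hN hEven x, ← hr]
      field_simp
    · intro j hj hjne
      have hjN : j < N := Finset.mem_range.1 hj
      rcases lt_or_gt_of_ne hjne with hlt | hgt
      · -- j < N / 2 : window DFT vanishes
        have ht : ((j : ℤ) - k0 : ℤ) = i + (j + (N / 2 - B) : ℕ) := by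
          rw [hk0]
          push_cast
          omega
        rw [ht, hzero (j + (N / 2 - B)) (by push_cast; omega), mul_zero]
      · rw [analyticHat_high N hEven x j hgt, zero_mul]
  -- absolute-value identity
  have hwabs : ‖dft w ((i + N - B : ℤ) : ZMod N)‖ ≠ 0 := by
    simpa using hwB
  have habs : (N : ℝ) * ‖stft w L (analyticSignal x) k0 0‖
      = |r| * ‖dft w ((i + N - B : ℤ) : ZMod N)‖ := by
    have := congrArg (fun c : ℂ => ‖c‖) hkey
    rwa [norm_mul, norm_mul, Complex.norm_natCast, Complex.norm_real, Real.norm_eq_abs] at this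
  refine ⟨?_, ?_, ?_⟩
  · rw [hzhalf, Complex.norm_real, Real.norm_eq_abs]
    exact habs
  · rw [hzhalf]
    simp
  · refine ⟨if 0 ≤ r then 1 else -1, by split <;> simp, ?_⟩
    rw [hzhalf]
    congr 1
    have hre : (if 0 ≤ r then (1:ℝ) else -1) * N *
        ‖stft w L (analyticSignal x) k0 0‖ /
          ‖dft w ((i + N - B : ℤ) : ZMod N)‖
        = (if 0 ≤ r then (1:ℝ) else -1) * |r| := by
      rw [mul_assoc, habs, mul_div_assoc, mul_div_cancel_right₀ _ hwabs]
    rw [hre]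
    split <;> rename_i h
    · rw [_root_.abs_of_nonneg h, one_mul]
    · rw [_root_.abs_of_neg (not_le.1 h)]; ring
end

section
/- Let N be a positive integer and B an integer with 2 ≤ B ≤ ⌈N/2⌉. Let w ∈ ℂ^N be a window and i an integer such that ŵ_{(i+t) mod N} = 0 for all t = 0, …, N − B − 1, ŵ_{(i+N−B) mod N} ≠ 0, and ŵ_{(i+N−B+1) mod N} ≠ 0. Let L be an integer with 0 < L < N and ⌈N/L⌉ ≥ 3, and let m1, m2, m3 be pairwise distinct integers with 0 ≤ m_j ≤ ⌈N/L⌉ − 1. Then there exists a nonzero polynomial P in N variables with complex coefficients such that for every x ∈ ℝ^N with P(x) ≠ 0 (evaluating P at the real vector x), the analytic signal z = A(x) is determined up to a global sign by its 3⌊N/2⌋ + 1 STFT magnitudes: for every analytic signal z̃ ∈ ℂ^N, if |ŷ^w_{(⌊N/2⌋−(i+N−B)) mod N, 0}(z̃)| = |ŷ^w_{(⌊N/2⌋−(i+N−B)) mod N, 0}(z)| and |ŷ^w_{(k−(i+N−B)) mod N, m_j}(z̃)| = |ŷ^w_{(k−(i+N−B)) mod N, m_j}(z)| for all k = 0, …,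 ⌊N/2⌋ − 1 and j = 1, 2, 3, then z̃ = z or z̃ = −z. -/
open Complex

local notation "π" => (Real.pi : ℂ)

section AuxHelpers
open Finset

lemma exp_per (N : ℕ) (a b : ℤ) (h : (N:ℤ) ∣ (a - b)) :
    Complex.exp (2 * π * I * (a:ℂ) / N) = Complex.exp (2 * π * I * (b:ℂ) / N) := by
  rcases eq_or_ne N 0 with rfl | hN0
  · have : a = b := by omega
    rw [this]
  obtain ⟨q, hq⟩ := h
  have ha : (a : ℂ) = (b : ℂ) + (N:ℂ) * (q:ℂ) := by
    have : a = b + N * q := by omega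
    exact_mod_cast congrArg (Int.cast : ℤ → ℂ) this
  have hN : (N:ℂ) ≠ 0 := by exact_mod_cast hN0
  rw [ha]
  rw [show 2 * π * I * ((b:ℂ) + (N:ℂ)*(q:ℂ)) / N = 2 * π * I * (b:ℂ)/N + (q:ℂ) * (2 * π * I) by
    field_simp]
  rw [Complex.exp_add, Complex.exp_int_mul_two_pi_mul_I, mul_one]

lemma sum_exp (N : ℕ) (hN : 0 < N) (d : ℤ) :
    ∑ n ∈ Finset.range N, Complex.exp (2 * π * I * (d:ℂ) * (n:ℂ) / N)
      = if (N:ℤ) ∣ d then (N:ℂ) else 0 := by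
  have hNC : (N:ℂ) ≠ 0 := by exact_mod_cast hN.ne'
  by_cases h : (N:ℤ) ∣ d
  · obtain ⟨q, hq⟩ := h
    have hdvd : (N:ℤ) ∣ d := ⟨q, hq⟩
    simp only [if_pos hdvd]
    have : ∀ n ∈ Finset.range N, Complex.exp (2 * π * I * (d:ℂ) * (n:ℂ) / N) = 1 := by
      intro n _
      have hd : (d:ℂ) = (N:ℂ) * (q:ℂ) := by exact_mod_cast congrArg (Int.cast : ℤ → ℂ) hq
      rw [hd, show 2 * π * I * ((N:ℂ)*(q:ℂ)) * (n:ℂ) / N = ((q * n : ℤ):ℂ) * (2 * π * I) by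
        push_cast; field_simp]
      exact Complex.exp_int_mul_two_pi_mul_I _
    rw [Finset.sum_congr rfl this]
    simp
  · simp only [if_neg h]
    have hterm : ∀ n : ℕ, Complex.exp (2 * π * I * (d:ℂ) * (n:ℂ) / N)
        = Complex.exp (2 * π * I * (d:ℂ) / N) ^ n := by
      intro n
      rw [← Complex.exp_nat_mul]
      congr 1; ring
    simp only [hterm]
    have h2 : (2:ℂ) * π * I ≠ 0 := by
      simp [Real.pi_ne_zero, Complex.I_ne_zero, Complex.ofReal_ne_zero]
    have hr1 : Complex.exp (2 * π * I * (d:ℂ) / N) ≠ 1 := by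
      intro hc
      rw [Complex.exp_eq_one_iff] at hc
      obtain ⟨k, hk⟩ := hc
      apply h
      refine ⟨k, ?_⟩
      rw [div_eq_iff hNC] at hk
      have hk2 : 2 * π * I * (d:ℂ) = 2 * π * I * ((N:ℂ) * (k:ℂ)) := by
        rw [hk]; ring
      have : (d:ℂ) = (N:ℂ) * (k:ℂ) := mul_left_cancel₀ h2 hk2
      exact_mod_cast this
    rw [geom_sum_eq hr1]
    have : Complex.exp (2 * π * I * (d:ℂ) / N) ^ N = 1 := by
      rw [← Complex.exp_nat_mul, show (N:ℂ) * (2 * π * I * (d:ℂ) / N) = (d:ℂ) * (2*π*I) by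
        field_simp]
      exact Complex.exp_int_mul_two_pi_mul_I d
    rw [this]
    simp

-- two-argument periodicity
lemma exp_per2 (N : ℕ) (a b t : ℤ) (h : (N:ℤ) ∣ (a - b)) :
    Complex.exp (2 * π * I * (a:ℂ) * (t:ℂ) / N) = Complex.exp (2 * π * I * (b:ℂ) * (t:ℂ) / N) := by
  have h' : (N:ℤ) ∣ (a*t - b*t) := by
    obtain ⟨q, hq⟩ := h
    exact ⟨q*t, by rw [← sub_mul, hq]; ring⟩
  have := exp_per N (a*t) (b*t) h'
  rw [show ((a*t : ℤ):ℂ) = (a:ℂ)*(t:ℂ) by push_cast; ring] at this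
  rw [show ((b*t : ℤ):ℂ) = (b:ℂ)*(t:ℂ) by push_cast; ring] at this
  rw [show 2 * π * I * (a:ℂ) * (t:ℂ) / N = 2 * π * I * ((a:ℂ)*(t:ℂ)) / N by ring]
  rw [show 2 * π * I * (b:ℂ) * (t:ℂ) / N = 2 * π * I * ((b:ℂ)*(t:ℂ)) / N by ring]
  exact this

lemma exp_per2_neg (N : ℕ) (a b t : ℤ) (h : (N:ℤ) ∣ (a - b)) :
    Complex.exp (-2 * π * I * (a:ℂ) * (t:ℂ) / N) = Complex.exp (-2 * π * I * (b:ℂ) * (t:ℂ) / N) := by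
  have := exp_per2 N a b (-t) h
  rw [show ((-t : ℤ):ℂ) = -(t:ℂ) by push_cast; ring] at this
  rw [show 2 * π * I * (a:ℂ) * (-(t:ℂ)) / N = -2 * π * I * (a:ℂ) * (t:ℂ) / N by ring] at this
  rw [show 2 * π * I * (b:ℂ) * (-(t:ℂ)) / N = -2 * π * I * (b:ℂ) * (t:ℂ) / N by ring] at this
  exact this

-- inverse DFT
lemma inv_dft (N : ℕ) (hN : 0 < N) (v : ZMod N → ℂ) (n : ZMod N) :
    v n = (1/N : ℂ) * ∑ l ∈ Finset.range N, dft v (l : ZMod N) *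
      Complex.exp (2 * π * I * (l:ℂ) * (n.val:ℂ) / N) := by
  haveI : NeZero N := ⟨hN.ne'⟩
  have hNC : (N:ℂ) ≠ 0 := by exact_mod_cast hN.ne'
  unfold dft
  have step1 : ∀ l ∈ Finset.range N, (∑ j ∈ Finset.range N, v j *
        Complex.exp (-2 * π * I * (((l:ZMod N)).val : ℂ) * (j:ℂ) / N)) *
      Complex.exp (2 * π * I * (l:ℂ) * (n.val:ℂ) / N)
      = ∑ j ∈ Finset.range N, v j *
        Complex.exp (2 * π * I * ((((n.val : ℤ) - (j:ℤ) : ℤ)):ℂ) * (l:ℂ) / N) := by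
    intro l hl
    rw [Finset.sum_mul]
    refine Finset.sum_congr rfl (fun j _ => ?_)
    have hlv : ((l : ZMod N)).val = l := ZMod.val_natCast_of_lt (Finset.mem_range.mp hl)
    rw [hlv, mul_assoc, ← Complex.exp_add]
    congr 1
    push_cast
    ring
  rw [Finset.sum_congr rfl step1, Finset.sum_comm]
  have inner : ∀ j ∈ Finset.range N, ∑ l ∈ Finset.range N, v j *
        Complex.exp (2 * π * I * ((((n.val : ℤ) - (j:ℤ) : ℤ)):ℂ) * (l:ℂ) / N)
      = v j * (if (N:ℤ) ∣ ((n.val : ℤ) - (j:ℤ)) then (N:ℂ) else 0) := by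
    intro j _
    rw [← Finset.mul_sum, sum_exp N hN]
  rw [Finset.sum_congr rfl inner]
  rw [Finset.sum_eq_single n.val]
  · have hd : (N:ℤ) ∣ ((n.val : ℤ) - (n.val:ℤ)) := by simp
    rw [if_pos hd, ZMod.natCast_rightInverse n]
    field_simp
  · intro j hj hne
    have hj' : j < N := Finset.mem_range.mp hj
    have hnd : ¬ (N:ℤ) ∣ ((n.val : ℤ) - (j:ℤ)) := by
      intro hdvd
      have h1 : n.val < N := ZMod.val_lt n
      have hd0 : (n.val:ℤ) - j = 0 := by
        by_contra h0
        have habs : (0:ℤ) < |(n.val:ℤ) - (j:ℤ)| := abs_pos.mpr h0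
        have hle := Int.le_of_dvd habs ((dvd_abs _ _).mpr hdvd)
        have hlt : |(n.val:ℤ) - (j:ℤ)| < N := abs_lt.mpr ⟨by omega, by omega⟩
        omega
      apply hne
      omega
    rw [if_neg hnd, mul_zero]
  · intro hmem
    exact absurd (Finset.mem_range.mpr (ZMod.val_lt n)) hmem

lemma dvd_small (N : ℕ) (d : ℤ) (h : (N:ℤ) ∣ d) (h1 : -(N:ℤ) < d) (h2 : d < N) : d = 0 := by
  by_contra h0
  have habs : (0:ℤ) < |d| := abs_pos.mpr h0
  have hle := Int.le_of_dvd habs ((dvd_abs _ _).mpr h)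
  have hlt : |d| < N := abs_lt.mpr ⟨h1, h2⟩
  omega

lemma dft_recon (N : ℕ) (hN : 0 < N) (c : ℕ → ℂ) (j : ℕ) (hj : j < N) :
    dft (fun n => (1/N : ℂ) * ∑ k ∈ Finset.range N, c k *
      Complex.exp (2 * π * I * (k:ℂ) * (n.val:ℂ) / N)) ((j : ℕ) : ZMod N) = c j := by
  haveI : NeZero N := ⟨hN.ne'⟩
  have hNC : (N:ℂ) ≠ 0 := by exact_mod_cast hN.ne'
  unfold dft
  have hjv : ((j : ZMod N)).val = j := ZMod.val_natCast_of_lt hj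
  have step1 : ∀ n ∈ Finset.range N,
      ((1/N : ℂ) * ∑ k ∈ Finset.range N, c k *
        Complex.exp (2 * π * I * (k:ℂ) * ((((n:ℕ) : ZMod N)).val:ℂ) / N)) *
      Complex.exp (-2 * π * I * (((j : ZMod N)).val : ℂ) * (n:ℂ) / N)
      = (1/N : ℂ) * ∑ k ∈ Finset.range N, c k *
        Complex.exp (2 * π * I * ((((k : ℤ) - (j:ℤ) : ℤ)):ℂ) * (n:ℂ) / N) := by
    intro n hn
    have hnv : (((n:ℕ) : ZMod N)).val = n := ZMod.val_natCast_of_lt (Finset.mem_range.mp hn)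
    rw [hnv, hjv, mul_assoc]
    congr 1
    rw [Finset.sum_mul]
    refine Finset.sum_congr rfl (fun k _ => ?_)
    rw [mul_assoc, ← Complex.exp_add]
    congr 2
    push_cast
    ring
  rw [Finset.sum_congr rfl step1, ← Finset.mul_sum, Finset.sum_comm]
  have inner : ∀ k ∈ Finset.range N, ∑ n ∈ Finset.range N, c k *
        Complex.exp (2 * π * I * ((((k : ℤ) - (j:ℤ) : ℤ)):ℂ) * (n:ℂ) / N)
      = c k * (if (N:ℤ) ∣ ((k : ℤ) - (j:ℤ)) then (N:ℂ) else 0) := by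
    intro k _
    rw [← Finset.mul_sum, sum_exp N hN]
  rw [Finset.sum_congr rfl inner]
  rw [Finset.sum_eq_single j]
  · rw [if_pos (by simp)]
    field_simp
  · intro k hk hne
    have hk' : k < N := Finset.mem_range.mp hk
    have hnd : ¬ (N:ℤ) ∣ ((k : ℤ) - (j:ℤ)) := by
      intro hdvd
      have := dvd_small N _ hdvd (by omega) (by omega)
      exact hne (by omega)
    rw [if_neg hnd, mul_zero]
  · intro hmem
    exact absurd (Finset.mem_range.mpr hj) hmem

lemma val_intCast_dvd (N : ℕ) [NeZero N] (a : ℤ) :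
    (N:ℤ) ∣ ((((a : ZMod N)).val : ℤ) - a) := by
  rw [← ZMod.intCast_zmod_eq_zero_iff_dvd]
  push_cast
  simp [ZMod.natCast_val, ZMod.intCast_zmod_cast]

noncomputable def eN (N : ℕ) (a : ℤ) : ℂ := Complex.exp (2 * π * I * (a:ℂ) / N)

lemma eN_add (N : ℕ) (a b : ℤ) : eN N (a + b) = eN N a * eN N b := by
  unfold eN
  rw [← Complex.exp_add]
  congr 1
  push_cast
  ring

lemma eN_dvd (N : ℕ) (a b : ℤ) (h : (N:ℤ) ∣ (a - b)) : eN N a = eN N b := exp_per N a b h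

lemma eN_zero (N : ℕ) : eN N 0 = 1 := by simp [eN]

lemma sum_eN (N : ℕ) (hN : 0 < N) (d : ℤ) :
    ∑ n ∈ Finset.range N, eN N (d * n) = if (N:ℤ) ∣ d then (N:ℂ) else 0 := by
  rw [← sum_exp N hN d]
  refine Finset.sum_congr rfl (fun n _ => ?_)
  unfold eN
  congr 1
  push_cast
  ring

lemma abs_eN (N : ℕ) (a : ℤ) : ‖eN N a‖ = 1 := by
  unfold eN
  rcases Nat.eq_zero_or_pos N with h | h
  · subst h; simp
  rw [show 2 * π * I * (a:ℂ) / N = ((2 * Real.pi * (a:ℝ) / N : ℝ) : ℂ) * I by push_cast; ring]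
  exact Complex.norm_exp_ofReal_mul_I _

lemma eN_pow (N : ℕ) (a : ℤ) (s : ℕ) : eN N a ^ s = eN N (a * s) := by
  induction s with
  | zero => simp [eN_zero]
  | succ t ih => rw [pow_succ, ih, ← eN_add]; congr 1; push_cast; ring

lemma dft_eN (N : ℕ) (z : ZMod N → ℂ) (u : ZMod N) :
    dft z u = ∑ n ∈ Finset.range N, z n * eN N (-((u.val : ℤ) * n)) := by
  unfold dft
  refine Finset.sum_congr rfl (fun n _ => ?_)
  congr 1
  unfold eN
  congr 1
  push_cast
  ring

lemma dft_eN_int (N : ℕ) [NeZero N] (z : ZMod N → ℂ) (a : ℤ) :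
    dft z (a : ZMod N) = ∑ n ∈ Finset.range N, z n * eN N (-(a * n)) := by
  rw [dft_eN]
  refine Finset.sum_congr rfl (fun n _ => ?_)
  congr 1
  apply eN_dvd
  obtain ⟨q, hq⟩ := val_intCast_dvd N a
  exact ⟨-(q * n), by linear_combination (-(n:ℤ)) * hq⟩

lemma inv_eN (N : ℕ) (hN : 0 < N) [NeZero N] (v : ZMod N → ℂ) (a : ℤ) :
    v (a : ZMod N) = (1/N : ℂ) * ∑ l ∈ Finset.range N, dft v (l : ZMod N) * eN N (l * a) := by
  rw [inv_dft N hN v (a : ZMod N)]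
  congr 1
  refine Finset.sum_congr rfl (fun l _ => ?_)
  congr 1
  rw [show Complex.exp (2 * π * I * (l:ℂ) * ((((a : ZMod N)).val):ℂ) / N)
      = eN N (l * (((a : ZMod N)).val : ℤ)) by unfold eN; congr 1; push_cast; ring]
  apply eN_dvd
  obtain ⟨q, hq⟩ := val_intCast_dvd N a
  exact ⟨l * q, by linear_combination (l:ℤ) * hq⟩

lemma stft_eq (N : ℕ) (hN : 0 < N) (w z : ZMod N → ℂ) (L k m : ℤ) :
    stft w L z k m = (1/N : ℂ) * ∑ l ∈ Finset.range N,
      dft w (l : ZMod N) * eN N (l * (m * L)) * dft z ((k + l : ℤ) : ZMod N) := by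
  haveI : NeZero N := ⟨hN.ne'⟩
  unfold stft
  have h1 : ∀ n ∈ Finset.range N, z n * w ((m * L - n : ℤ) : ZMod N) *
      Complex.exp (-2 * π * I * (k:ℂ) * (n:ℂ) / N)
      = (1/N : ℂ) * ∑ l ∈ Finset.range N,
          z n * dft w (l : ZMod N) * (eN N (l * (m*L)) * eN N (-((k + l) * n))) := by
    intro n _
    rw [inv_eN N hN w (m * L - n : ℤ)]
    rw [show Complex.exp (-2 * π * I * (k:ℂ) * (n:ℂ) / N) = eN N (-(k * n)) by
      unfold eN; congr 1; push_cast; ring]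
    rw [Finset.mul_sum, Finset.mul_sum, Finset.sum_mul, Finset.mul_sum]
    refine Finset.sum_congr rfl (fun l _ => ?_)
    rw [show eN N (l * (m*L)) * eN N (-((k + l) * n)) = eN N (l * (m * L - n)) * eN N (-(k*n)) by
      rw [← eN_add, ← eN_add]; congr 1; ring]
    ring
  rw [Finset.sum_congr rfl h1, ← Finset.mul_sum, Finset.sum_comm]
  congr 1
  refine Finset.sum_congr rfl (fun l _ => ?_)
  rw [dft_eN_int N z (k + l : ℤ), Finset.mul_sum]
  refine Finset.sum_congr rfl (fun n _ => ?_)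
  ring

lemma stft_band (N : ℕ) (hN : 0 < N) (B : ℕ) (hB0 : 0 < B) (hBN : B ≤ N)
    (w : ZMod N → ℂ) (i : ℤ)
    (hzero : ∀ t : ℕ, (t : ℤ) ≤ (N : ℤ) - B - 1 → dft w ((i + t : ℤ) : ZMod N) = 0)
    (z : ZMod N → ℂ) (L k m : ℤ) :
    stft w L z k m = (1/N : ℂ) * ∑ s ∈ Finset.range B,
      dft w ((i + N - B + s : ℤ) : ZMod N) * eN N ((i + N - B + s) * (m * L)) *
      dft z ((k + (i + N - B + s) : ℤ) : ZMod N) := by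
  haveI : NeZero N := ⟨hN.ne'⟩
  rw [stft_eq N hN w z L k m]
  congr 1
  set H : ZMod N → ℂ := fun u => dft w u * eN N ((u.val : ℤ) * (m * L)) *
    dft z ((k + u.val : ℤ) : ZMod N) with hH
  have e1 : ∑ l ∈ Finset.range N,
      dft w (l : ZMod N) * eN N (l * (m * L)) * dft z ((k + l : ℤ) : ZMod N)
      = ∑ u : ZMod N, H u := by
    refine Finset.sum_nbij' (fun l => ((l : ℕ) : ZMod N)) (fun u => u.val) ?_ ?_ ?_ ?_ ?_
    · intro a _; exact Finset.mem_univ _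
    · intro u _; exact Finset.mem_range.mpr (ZMod.val_lt u)
    · intro a ha; exact ZMod.val_natCast_of_lt (Finset.mem_range.mp ha)
    · intro u _; exact ZMod.natCast_rightInverse u
    · intro a ha
      have hv : (((a : ℕ) : ZMod N)).val = a := ZMod.val_natCast_of_lt (Finset.mem_range.mp ha)
      simp only [hH, hv]
  rw [e1]
  set g : ℕ → ZMod N := fun s => ((i + N - B + s : ℤ) : ZMod N) with hg
  have hginj : ∀ s1 ∈ Finset.range B, ∀ s2 ∈ Finset.range B, g s1 = g s2 → s1 = s2 := by
    intro s1 h1 s2 h2 hEq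
    have : ((s1 : ℤ) - s2 : ℤ) = 0 := by
      apply dvd_small N
      · rw [← ZMod.intCast_zmod_eq_zero_iff_dvd]
        simp only [hg] at hEq
        push_cast at hEq ⊢
        linear_combination hEq
      · have := Finset.mem_range.mp h2; omega
      · have := Finset.mem_range.mp h1; omega
    omega
  have e2 : ∑ u : ZMod N, H u = ∑ s ∈ Finset.range B, H (g s) := by
    rw [← Finset.sum_image hginj]
    symm
    apply Finset.sum_subset (Finset.subset_univ _)
    intro u _ hu
    have hzero_u : dft w u = 0 := by
      set t : ℕ := (u - (i : ZMod N)).val with ht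
      have hut : u = ((i + t : ℤ) : ZMod N) := by
        have : ((t : ℕ) : ZMod N) = u - (i : ZMod N) := ZMod.natCast_rightInverse _
        push_cast
        rw [this]
        ring
      by_cases hcase : (t : ℤ) ≤ (N : ℤ) - B - 1
      · rw [hut]; exact hzero t hcase
      · exfalso
        apply hu
        have htN : t < N := ZMod.val_lt _
        refine Finset.mem_image.mpr ⟨t - (N - B), Finset.mem_range.mpr (by omega), ?_⟩
        rw [hut]
        simp only [hg]
        congr 1
        push_cast
        omega
    simp only [hH, hzero_u, zero_mul]
  rw [e2]
  refine Finset.sum_congr rfl (fun s _ => ?_)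
  have hval : (((g s).val : ℤ) : ZMod N) = ((i + N - B + s : ℤ) : ZMod N) := by
    simp only [hg]
    push_cast
    simp [ZMod.natCast_val, ZMod.intCast_cast, ZMod.cast_id]
  have hdvd : (N : ℤ) ∣ (((g s).val : ℤ) - (i + N - B + s)) := by
    rw [← ZMod.intCast_zmod_eq_zero_iff_dvd]
    push_cast
    push_cast at hval
    rw [hval]; ring
  have h2 : eN N (((g s).val : ℤ) * (m * L)) = eN N ((i + N - B + s) * (m * L)) :=
    eN_dvd N _ _ (by obtain ⟨q, hq⟩ := hdvd; exact ⟨q * (m*L), by linear_combination (m*L) * hq⟩)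
  have h3 : ((k + (g s).val : ℤ) : ZMod N) = ((k + (i + N - B + s) : ℤ) : ZMod N) := by
    obtain ⟨q, hq⟩ := hdvd
    rw [show (k + (g s).val : ℤ) = k + (i + N - B + s) + N * q by linear_combination hq]
    push_cast
    simp [ZMod.natCast_self]
  simp only [hH]
  rw [h2, h3]

lemma hat_vanish (N : ℕ) (x : ZMod N → ℝ) (k : ℕ) (hk : N / 2 < k) : analyticHat N x k = 0 := by
  unfold analyticHat
  rcases Nat.even_or_odd N with hE | hO
  · have hmod : N % 2 = 0 := Nat.even_iff.mp hE
    rw [if_pos hmod, if_neg (by omega), if_neg (by omega), if_neg (by omega)]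
  · have hmod : ¬ (N % 2 = 0) := by
      have := Nat.odd_iff.mp hO; omega
    have h2 : (N - 1) / 2 = N / 2 := by omega
    rw [if_neg hmod, if_neg (by omega), if_neg (by omega)]

lemma hat_dft (N : ℕ) (hN : 0 < N) (x : ZMod N → ℝ) (j : ℕ) (hj : j < N) :
    dft (analyticSignal x) ((j : ℕ) : ZMod N) = analyticHat N x j := by
  have := dft_recon N hN (analyticHat N x) j hj
  unfold analyticSignal
  exact this

lemma meas (N : ℕ) (hN : 0 < N) (B : ℕ) (hB0 : 0 < B) (hBN : B ≤ N)
    (w : ZMod N → ℂ) (i : ℤ)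
    (hzero : ∀ t : ℕ, (t : ℤ) ≤ (N : ℤ) - B - 1 → dft w ((i + t : ℤ) : ZMod N) = 0)
    (x : ZMod N → ℝ) (L m : ℤ) (κ : ℕ) (hκB : κ + B ≤ N) :
    stft w L (analyticSignal x) ((κ:ℤ) - (i + N - B)) m
      = (1/N : ℂ) * eN N ((i + N - B) * (m * L)) * ∑ s ∈ Finset.range B,
          dft w ((i + N - B + s : ℤ) : ZMod N) * (eN N (m * L))^s * analyticHat N x (κ + s) := by
  haveI : NeZero N := ⟨hN.ne'⟩
  rw [stft_band N hN B hB0 hBN w i hzero (analyticSignal x) L _ m]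
  rw [mul_assoc]
  congr 1
  rw [Finset.mul_sum]
  refine Finset.sum_congr rfl (fun s hs => ?_)
  have hsB : s < B := Finset.mem_range.mp hs
  have harg : (((κ:ℤ) - (i + N - B) + (i + N - B + s) : ℤ) : ZMod N) = (((κ + s : ℕ) : ℕ) : ZMod N) := by
    rw [show ((κ:ℤ) - (i + N - B) + (i + N - B + s) : ℤ) = ((κ + s : ℕ) : ℤ) by push_cast; ring]
    push_cast
    ring
  rw [harg, hat_dft N hN x (κ + s) (by omega)]
  rw [show (i + N - B + s) * (m * L) = (i + N - B) * (m * L) + (m * L) * s by ring,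
    eN_add, eN_pow]
  ring

lemma dft_cos (N : ℕ) (hN : 0 < N) (j κ : ℕ) (hκN : κ < N) :
    dft (fun n => ((Real.cos (2 * Real.pi * (j:ℝ) * ((n.val:ℕ):ℝ) / (N:ℝ)) : ℝ) : ℂ)) ((κ:ℕ) : ZMod N)
    = ((if (N:ℤ) ∣ ((j:ℤ) - κ) then (N:ℂ) else 0) + (if (N:ℤ) ∣ (-(j:ℤ) - κ) then (N:ℂ) else 0))/2 := by
  haveI : NeZero N := ⟨hN.ne'⟩
  unfold dft
  have hκv : (((κ:ℕ) : ZMod N)).val = κ := ZMod.val_natCast_of_lt hκN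
  have step : ∀ n ∈ Finset.range N,
      ((Real.cos (2 * Real.pi * (j:ℝ) * (((((n:ℕ) : ZMod N)).val:ℕ):ℝ) / (N:ℝ)) : ℝ) : ℂ) *
        Complex.exp (-2 * π * I * ((((κ:ℕ):ZMod N)).val : ℂ) * (n:ℂ) / N)
      = (eN N (((j:ℤ) - κ) * n) + eN N ((-(j:ℤ) - κ) * n)) / 2 := by
    intro n hn
    have hnv : ((((n:ℕ) : ZMod N)).val) = n := ZMod.val_natCast_of_lt (Finset.mem_range.mp hn)
    rw [hnv, hκv]
    rw [Complex.ofReal_cos, Complex.cos]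
    have ha : Complex.exp (((2 * Real.pi * (j:ℝ) * ((n:ℕ):ℝ) / (N:ℝ) : ℝ) : ℂ) * I)
        = eN N ((j:ℤ) * n) := by
      unfold eN; congr 1; push_cast; ring
    have hb : Complex.exp (-(((2 * Real.pi * (j:ℝ) * ((n:ℕ):ℝ) / (N:ℝ) : ℝ) : ℂ)) * I)
        = eN N (-(j:ℤ) * n) := by
      unfold eN; congr 1; push_cast; ring
    have hc : Complex.exp (-2 * π * I * ((κ:ℕ) : ℂ) * (n:ℂ) / N) = eN N (-(κ:ℤ) * n) := by
      unfold eN; congr 1; push_cast; ring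
    rw [ha, hb, hc, div_mul_eq_mul_div, add_mul, ← eN_add, ← eN_add,
      show (j:ℤ)*n + -(κ:ℤ)*n = ((j:ℤ)-κ)*n by ring,
      show (-(j:ℤ))*n + -(κ:ℤ)*n = (-(j:ℤ)-κ)*n by ring]
  rw [Finset.sum_congr rfl step]
  rw [← Finset.sum_div, Finset.sum_add_distrib, sum_eN N hN, sum_eN N hN]

lemma hat_eq (N : ℕ) (x : ZMod N → ℝ) (κ : ℕ) (hκ : κ ≤ N/2) :
    ∃ c : ℂ, c ≠ 0 ∧ analyticHat N x κ = c * dft (fun n => ((x n : ℝ) : ℂ)) ((κ:ℕ) : ZMod N) := by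
  unfold analyticHat
  by_cases hmod : N % 2 = 0
  · rw [if_pos hmod]
    by_cases h0 : κ = 0
    · subst h0
      refine ⟨1, one_ne_zero, ?_⟩
      rw [if_pos rfl, one_mul, Nat.cast_zero]
    · rw [if_neg h0]
      by_cases h1 : κ ≤ N / 2 - 1
      · rw [if_pos h1]; exact ⟨2, two_ne_zero, rfl⟩
      · have hκ2 : κ = N / 2 := by omega
        rw [if_neg h1, if_pos hκ2, hκ2]
        exact ⟨1, one_ne_zero, (one_mul _).symm⟩
  · rw [if_neg hmod]
    by_cases h0 : κ = 0
    · subst h0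
      refine ⟨1, one_ne_zero, ?_⟩
      rw [if_pos rfl, one_mul, Nat.cast_zero]
    · have h1 : κ ≤ (N - 1) / 2 := by omega
      rw [if_neg h0, if_pos h1]
      exact ⟨2, two_ne_zero, rfl⟩

lemma hat_cos_ne (N : ℕ) (hN : 0 < N) (j : ℕ) (hj : j ≤ N/2) :
    analyticHat N (fun n => Real.cos (2 * Real.pi * (j:ℝ) * ((n.val:ℕ):ℝ) / (N:ℝ))) j ≠ 0 := by
  obtain ⟨c, hc, heq⟩ := hat_eq N _ j hj
  rw [heq, dft_cos N hN j j (by omega)]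
  have hNC : (N:ℂ) ≠ 0 := by exact_mod_cast hN.ne'
  apply mul_ne_zero hc
  rw [if_pos (by simp)]
  by_cases h2 : (N:ℤ) ∣ (-(j:ℤ) - j)
  · rw [if_pos h2]
    intro hcon
    rw [show ((N:ℂ) + N)/2 = N * (2/2) by ring] at hcon
    simp at hcon
    exact hNC (by exact_mod_cast hcon)
  · rw [if_neg h2]
    intro hcon
    rw [add_zero] at hcon
    rcases div_eq_zero_iff.mp hcon with h | h
    · exact hNC h
    · norm_num at h

lemma hat_cos_zero (N : ℕ) (hN : 0 < N) (j κ : ℕ) (hj : j ≤ N/2) (hκ : κ ≤ N/2) (hne : κ ≠ j) :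
    analyticHat N (fun n => Real.cos (2 * Real.pi * (j:ℝ) * ((n.val:ℕ):ℝ) / (N:ℝ))) κ = 0 := by
  obtain ⟨c, hc, heq⟩ := hat_eq N _ κ hκ
  rw [heq, dft_cos N hN j κ (by omega)]
  have hNhalf : N / 2 < N := by omega
  have hd1 : ¬ (N:ℤ) ∣ ((j:ℤ) - κ) := by
    intro h
    have := dvd_small N _ h (by omega) (by omega)
    omega
  have hsum : j + κ < N := by
    rcases Nat.even_or_odd N with hE | hO
    · have := Nat.even_iff.mp hE
      by_contra hcon
      have hj2 : j = N/2 := by omega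
      have hκ2 : κ = N/2 := by omega
      omega
    · have := Nat.odd_iff.mp hO
      omega
  have hd2 : ¬ (N:ℤ) ∣ (-(j:ℤ) - κ) := by
    intro h
    have := dvd_small N _ h (by omega) (by omega)
    omega
  rw [if_neg hd1, if_neg hd2]
  simp

lemma circle_unique (p q r1 r2 r3 : ℂ)
    (h1 : ‖p + r1‖ = ‖q + r1‖)
    (h2 : ‖p + r2‖ = ‖q + r2‖)
    (h3 : ‖p + r3‖ = ‖q + r3‖)
    (hind : (starRingEnd ℂ) (r1 - r2) * (r1 - r3) - (r1 - r2) * (starRingEnd ℂ) (r1 - r3) ≠ 0) :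
    p = q := by
  have nS1 : Complex.normSq (p + r1) = Complex.normSq (q + r1) := by
    rw [Complex.normSq_eq_norm_sq, Complex.normSq_eq_norm_sq, h1]
  have nS2 : Complex.normSq (p + r2) = Complex.normSq (q + r2) := by
    rw [Complex.normSq_eq_norm_sq, Complex.normSq_eq_norm_sq, h2]
  have nS3 : Complex.normSq (p + r3) = Complex.normSq (q + r3) := by
    rw [Complex.normSq_eq_norm_sq, Complex.normSq_eq_norm_sq, h3]
  simp only [Complex.normSq_apply, Complex.add_re, Complex.add_im] at nS1 nS2 nS3
  set e1 := r1 - r2 with he1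
  set e2 := r1 - r3 with he2
  have hdet : e1.re * e2.im - e1.im * e2.re ≠ 0 := by
    intro h
    apply hind
    have : (starRingEnd ℂ) e1 * e2 - e1 * (starRingEnd ℂ) e2
        = Complex.I * (2 * ((e1.re * e2.im - e1.im * e2.re : ℝ) : ℂ)) := by
      apply Complex.ext <;>
        simp [Complex.mul_re, Complex.mul_im, Complex.conj_re, Complex.conj_im,
          Complex.sub_re, Complex.sub_im] <;> ring
    rw [this, h]
    simp
  have hre1 : e1.re = r1.re - r2.re := by rw [he1, Complex.sub_re]
  have him1 : e1.im = r1.im - r2.im := by rw [he1, Complex.sub_im]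
  have hre2 : e2.re = r1.re - r3.re := by rw [he2, Complex.sub_re]
  have him2 : e2.im = r1.im - r3.im := by rw [he2, Complex.sub_im]
  have E1 : (p.re - q.re) * e1.re + (p.im - q.im) * e1.im = 0 := by
    rw [hre1, him1]
    linear_combination (nS1 - nS2) / 2
  have E2 : (p.re - q.re) * e2.re + (p.im - q.im) * e2.im = 0 := by
    rw [hre2, him2]
    linear_combination (nS1 - nS3) / 2
  have hdr : (p.re - q.re) * (e1.re * e2.im - e1.im * e2.re) = 0 := by
    linear_combination e2.im * E1 - e1.im * E2
  have hdi : (p.im - q.im) * (e1.re * e2.im - e1.im * e2.re) = 0 := by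
    linear_combination e1.re * E2 - e2.re * E1
  have h4 : p.re = q.re := by
    rcases mul_eq_zero.mp hdr with h | h
    · linarith
    · exact absurd h hdet
  have h5 : p.im = q.im := by
    rcases mul_eq_zero.mp hdi with h | h
    · linarith
    · exact absurd h hdet
  exact Complex.ext h4 h5

lemma three_unit (a b c : ℂ) (ha : ‖a‖ = 1) (hb : ‖b‖ = 1)
    (hc : ‖c‖ = 1) (hab : a ≠ b) (hac : a ≠ c) (hbc : b ≠ c) :
    (starRingEnd ℂ) (a - b) * (a - c) - (a - b) * (starRingEnd ℂ) (a - c) ≠ 0 := by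
  have ha0 : a ≠ 0 := by intro h; rw [h] at ha; simp at ha
  have hb0 : b ≠ 0 := by intro h; rw [h] at hb; simp at hb
  have hc0 : c ≠ 0 := by intro h; rw [h] at hc; simp at hc
  have hca : (starRingEnd ℂ) a = a⁻¹ := by
    have h1 : a * (starRingEnd ℂ) a = 1 := by
      rw [Complex.mul_conj]
      rw [Complex.normSq_eq_norm_sq, ha]
      norm_num
    field_simp
    linear_combination h1
  have hcb : (starRingEnd ℂ) b = b⁻¹ := by
    have h1 : b * (starRingEnd ℂ) b = 1 := by
      rw [Complex.mul_conj, Complex.normSq_eq_norm_sq, hb]; norm_num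
    field_simp
    linear_combination h1
  have hcc : (starRingEnd ℂ) c = c⁻¹ := by
    have h1 : c * (starRingEnd ℂ) c = 1 := by
      rw [Complex.mul_conj, Complex.normSq_eq_norm_sq, hc]; norm_num
    field_simp
    linear_combination h1
  have key : (starRingEnd ℂ) (a - b) * (a - c) - (a - b) * (starRingEnd ℂ) (a - c)
      = ((b - a) * (a - c) * (c - b)) / (a * b * c) := by
    rw [map_sub, map_sub, hca, hcb, hcc]
    field_simp
    ring
  rw [key]
  apply div_ne_zero
  · exact mul_ne_zero (mul_ne_zero (sub_ne_zero.mpr (Ne.symm hab)) (sub_ne_zero.mpr hac))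
      (sub_ne_zero.mpr (Ne.symm hbc))
  · exact mul_ne_zero (mul_ne_zero ha0 hb0) hc0

noncomputable def Pdft (N : ℕ) (κ : ℕ) : MvPolynomial (ZMod N) ℂ :=
  ∑ n ∈ Finset.range N, MvPolynomial.C
    (Complex.exp (-2 * π * I * (((((κ:ℕ):ZMod N)).val):ℂ) * (n:ℂ) / N)) *
    MvPolynomial.X ((n:ℕ) : ZMod N)

noncomputable def PdftC (N : ℕ) (κ : ℕ) : MvPolynomial (ZMod N) ℂ :=
  ∑ n ∈ Finset.range N, MvPolynomial.C
    (Complex.exp (2 * π * I * (((((κ:ℕ):ZMod N)).val):ℂ) * (n:ℂ) / N)) *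
    MvPolynomial.X ((n:ℕ) : ZMod N)

lemma eval_Pdft (N : ℕ) (κ : ℕ) (y : ZMod N → ℂ) :
    MvPolynomial.eval y (Pdft N κ) = dft y ((κ:ℕ) : ZMod N) := by
  unfold Pdft dft
  rw [map_sum]
  refine Finset.sum_congr rfl (fun n _ => ?_)
  simp [mul_comm]

lemma eval_PdftC (N : ℕ) (κ : ℕ) (x : ZMod N → ℝ) :
    MvPolynomial.eval (fun v => ((x v : ℝ) : ℂ)) (PdftC N κ)
      = (starRingEnd ℂ) (dft (fun n => ((x n : ℝ) : ℂ)) ((κ:ℕ) : ZMod N)) := by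
  unfold PdftC dft
  rw [map_sum, map_sum]
  refine Finset.sum_congr rfl (fun n _ => ?_)
  simp only [MvPolynomial.eval_mul, MvPolynomial.eval_C, MvPolynomial.eval_X]
  rw [map_mul, Complex.conj_ofReal, ← Complex.exp_conj]
  rw [mul_comm]
  congr 2
  simp only [map_div₀, map_mul, map_neg, map_ofNat, Complex.conj_I, Complex.conj_ofReal,
    Complex.conj_natCast]
  ring

noncomputable def Phat (N : ℕ) (κ : ℕ) : MvPolynomial (ZMod N) ℂ :=
  if N % 2 = 0 then
    if κ = 0 then Pdft N 0
    else if κ ≤ N / 2 - 1 then 2 * Pdft N κ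
    else if κ = N / 2 then Pdft N (N/2)
    else 0
  else
    if κ = 0 then Pdft N 0
    else if κ ≤ (N - 1) / 2 then 2 * Pdft N κ
    else 0

noncomputable def PhatC (N : ℕ) (κ : ℕ) : MvPolynomial (ZMod N) ℂ :=
  if N % 2 = 0 then
    if κ = 0 then PdftC N 0
    else if κ ≤ N / 2 - 1 then 2 * PdftC N κ
    else if κ = N / 2 then PdftC N (N/2)
    else 0
  else
    if κ = 0 then PdftC N 0
    else if κ ≤ (N - 1) / 2 then 2 * PdftC N κ
    else 0

lemma eval_Phat (N : ℕ) (κ : ℕ) (x : ZMod N → ℝ) :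
    MvPolynomial.eval (fun v => ((x v : ℝ) : ℂ)) (Phat N κ) = analyticHat N x κ := by
  unfold Phat analyticHat
  split_ifs <;>
    simp only [map_mul, map_ofNat, eval_Pdft, map_zero, Nat.cast_zero] <;>
    simp [eval_Pdft]

lemma eval_PhatC (N : ℕ) (κ : ℕ) (x : ZMod N → ℝ) :
    MvPolynomial.eval (fun v => ((x v : ℝ) : ℂ)) (PhatC N κ)
      = (starRingEnd ℂ) (analyticHat N x κ) := by
  unfold PhatC analyticHat
  have h2 : ((starRingEnd ℂ) 2 : ℂ) = 2 := map_ofNat _ 2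
  split_ifs <;>
    first
      | (simp [eval_PdftC, map_mul, h2])
      | (rw [map_zero, map_zero])

lemma ne_zero_of_eval (N : ℕ) (p : MvPolynomial (ZMod N) ℂ) (y : ZMod N → ℂ)
    (h : MvPolynomial.eval y p ≠ 0) : p ≠ 0 := by
  intro h0
  rw [h0] at h
  simp at h

lemma eN_eq_dvd (N : ℕ) (hN : 0 < N) (a b : ℤ) (h : eN N a = eN N b) : (N:ℤ) ∣ (a - b) := by
  have hNC : (N:ℂ) ≠ 0 := by exact_mod_cast hN.ne'
  have h2 : (2:ℂ) * π * I ≠ 0 := by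
    simp [Real.pi_ne_zero, Complex.I_ne_zero, Complex.ofReal_ne_zero]
  unfold eN at h
  have hsub : Complex.exp (2 * π * I * (a:ℂ) / N - 2 * π * I * (b:ℂ) / N) = 1 := by
    rw [Complex.exp_sub, h, div_self (Complex.exp_ne_zero _)]
  rw [Complex.exp_eq_one_iff] at hsub
  obtain ⟨k, hk⟩ := hsub
  refine ⟨k, ?_⟩
  have hk2 : 2 * π * I * ((a:ℂ) - b) = 2 * π * I * ((N:ℂ) * k) := by
    field_simp at hk
    linear_combination (2 * π * I) * hk
  have := mul_left_cancel₀ h2 hk2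
  exact_mod_cast this

lemma psi_distinct (N : ℕ) (hN : 0 < N) (L : ℤ) (hL0 : 0 < L) (m m' : ℤ)
    (hm : 0 ≤ m) (hm' : 0 ≤ m') (hmc : m ≤ ⌈(N : ℚ) / (L : ℚ)⌉ - 1)
    (hmc' : m' ≤ ⌈(N : ℚ) / (L : ℚ)⌉ - 1) (hne : m ≠ m') :
    eN N (m * L) ≠ eN N (m' * L) := by
  intro h
  have hd := eN_eq_dvd N hN _ _ h
  have hbound : (⌈(N : ℚ) / (L : ℚ)⌉ - 1 : ℚ) * L < N := by
    have h1 : (⌈(N : ℚ) / (L : ℚ)⌉ : ℚ) < (N : ℚ) / L + 1 := Int.ceil_lt_add_one _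
    have hLQ : (0:ℚ) < (L:ℚ) := by exact_mod_cast hL0
    have := mul_lt_mul_of_pos_right (show (⌈(N : ℚ) / (L : ℚ)⌉ - 1 : ℚ) < (N:ℚ)/L by linarith) hLQ
    calc (⌈(N : ℚ) / (L : ℚ)⌉ - 1 : ℚ) * L < ((N:ℚ)/L) * L := this
      _ = N := by field_simp
  have hint : (⌈(N : ℚ) / (L : ℚ)⌉ - 1) * L < (N:ℤ) := by
    have : ((( ⌈(N : ℚ) / (L : ℚ)⌉ - 1) * L : ℤ) : ℚ) < ((N:ℤ) : ℚ) := by push_cast; push_cast at hbound; linarith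
    exact_mod_cast this
  have habs : m * L - m' * L ≠ 0 := by
    intro h0
    apply hne
    have : (m - m') * L = 0 := by linarith
    rcases mul_eq_zero.mp this with h | h
    · omega
    · omega
  have := dvd_small N (m * L - m' * L) hd (by nlinarith) (by nlinarith)
  exact habs this

lemma hat_zero_real (N : ℕ) (hN : 0 < N) (x : ZMod N → ℝ) :
    analyticHat N x 0 = ∑ n ∈ Finset.range N, ((x n : ℝ) : ℂ) := by
  haveI : NeZero N := ⟨hN.ne'⟩
  have hdft : dft (fun n => ((x n : ℝ) : ℂ)) 0 = ∑ n ∈ Finset.range N, ((x n : ℝ) : ℂ) := by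
    unfold dft
    refine Finset.sum_congr rfl (fun n _ => ?_)
    rw [show (-2 * π * I * (((0 : ZMod N)).val : ℂ) * (n:ℂ) / N) = 0 by
      rw [ZMod.val_zero]; push_cast; ring]
    rw [Complex.exp_zero, mul_one]
  unfold analyticHat
  split_ifs with h1 h2 h3 <;> simp_all

end AuxHelpers

/-- Theorem `abc` of the paper: a generic analytic signal is
determined up to a global sign by `3⌊N/2⌋ + 1` STFT measurements with a
`B`-bandlimited window, `2 ≤ B ≤ ⌈N/2⌉`. -/
theorem stft_pr_bandlimited_window (N : ℕ) (hN : 0 < N)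
    (B : ℕ) (hB2 : 2 ≤ B) (hBle : B ≤ (N + 1) / 2)
    (w : ZMod N → ℂ) (i : ℤ)
    (hzero : ∀ t : ℕ, (t : ℤ) ≤ (N : ℤ) - B - 1 → dft w ((i + t : ℤ) : ZMod N) = 0)
    (hwB : dft w ((i + N - B : ℤ) : ZMod N) ≠ 0)
    (hwB1 : dft w ((i + N - B + 1 : ℤ) : ZMod N) ≠ 0)
    (L : ℤ) (hL0 : 0 < L) (hLN : L < (N : ℤ)) (hceil : 3 ≤ ⌈(N : ℚ) / (L : ℚ)⌉)
    (m1 m2 m3 : ℤ)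
    (hm1 : 0 ≤ m1) (hm1' : m1 ≤ ⌈(N : ℚ) / (L : ℚ)⌉ - 1)
    (hm2 : 0 ≤ m2) (hm2' : m2 ≤ ⌈(N : ℚ) / (L : ℚ)⌉ - 1)
    (hm3 : 0 ≤ m3) (hm3' : m3 ≤ ⌈(N : ℚ) / (L : ℚ)⌉ - 1)
    (h12 : m1 ≠ m2) (h13 : m1 ≠ m3) (h23 : m2 ≠ m3) :
    ∃ P : MvPolynomial (ZMod N) ℂ, P ≠ 0 ∧
      ∀ x : ZMod N → ℝ, MvPolynomial.eval (fun n => (x n : ℂ)) P ≠ 0 →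
        ∀ zt : ZMod N → ℂ, IsAnalytic zt →
          ‖stft w L zt (((N / 2 : ℕ) : ℤ) - (i + N - B)) 0‖ =
            ‖stft w L (analyticSignal x) (((N / 2 : ℕ) : ℤ) - (i + N - B)) 0‖ →
          (∀ k : ℕ, k < N / 2 → ∀ m ∈ ({m1, m2, m3} : Set ℤ),
            ‖stft w L zt ((k : ℤ) - (i + N - B)) m‖ =
              ‖stft w L (analyticSignal x) ((k : ℤ) - (i + N - B)) m‖) →
          zt = analyticSignal x ∨ zt = -analyticSignal x := by
  haveI : NeZero N := ⟨hN.ne'⟩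
  have hN3 : 3 ≤ N := by omega
  set M : ℕ := N / 2 with hM
  have hM1 : 1 ≤ M := by omega
  have hMB : M + B ≤ N := by omega
  have hB0 : 0 < B := by omega
  have hBN : B ≤ N := by omega
  -- notation
  set ψ : ℤ → ℂ := fun m => eN N (m * L) with hψ
  set W : ℕ → ℂ := fun s => dft w ((i + N - B + s : ℤ) : ZMod N) with hWdef
  have hW0 : W 0 ≠ 0 := by
    have harg : ((i + (N:ℤ) - B + ((0:ℕ):ℤ)) : ℤ) = i + N - B := by push_cast; ring
    simp only [hWdef, harg]
    exact hwB
  have hW1 : W 1 ≠ 0 := by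
    have harg : ((i + (N:ℤ) - B + ((1:ℕ):ℤ)) : ℤ) = i + N - B + 1 := by push_cast; ring
    simp only [hWdef, harg]
    exact hwB1
  -- ψ values distinct, on unit circle
  have habsψ : ∀ m : ℤ, ‖ψ m‖ = 1 := fun m => abs_eN N (m * L)
  have hψ12 : ψ m1 ≠ ψ m2 := psi_distinct N hN L hL0 m1 m2 hm1 hm2 hm1' hm2' h12
  have hψ13 : ψ m1 ≠ ψ m3 := psi_distinct N hN L hL0 m1 m3 hm1 hm3 hm1' hm3' h13
  have hψ23 : ψ m2 ≠ ψ m3 := psi_distinct N hN L hL0 m2 m3 hm2 hm3 hm2' hm3' h23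
  -- polynomials
  set E1 : ℕ → MvPolynomial (ZMod N) ℂ := fun κ => ∑ s ∈ Finset.Ico 1 B,
    MvPolynomial.C (W s * (ψ m1 ^ s - ψ m2 ^ s)) * Phat N (κ + s) with hE1
  set E2 : ℕ → MvPolynomial (ZMod N) ℂ := fun κ => ∑ s ∈ Finset.Ico 1 B,
    MvPolynomial.C (W s * (ψ m1 ^ s - ψ m3 ^ s)) * Phat N (κ + s) with hE2
  set E1C : ℕ → MvPolynomial (ZMod N) ℂ := fun κ => ∑ s ∈ Finset.Ico 1 B,
    MvPolynomial.C ((starRingEnd ℂ) (W s * (ψ m1 ^ s - ψ m2 ^ s))) * PhatC N (κ + s) with hE1C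
  set E2C : ℕ → MvPolynomial (ZMod N) ℂ := fun κ => ∑ s ∈ Finset.Ico 1 B,
    MvPolynomial.C ((starRingEnd ℂ) (W s * (ψ m1 ^ s - ψ m3 ^ s))) * PhatC N (κ + s) with hE2C
  set Q : ℕ → MvPolynomial (ZMod N) ℂ := fun κ => E1C κ * E2 κ - E1 κ * E2C κ with hQ
  set P : MvPolynomial (ZMod N) ℂ :=
    (∏ κ ∈ Finset.range (M+1), Phat N κ) * ∏ κ ∈ Finset.range M, Q κ with hP
  -- evaluation of polynomials at a real point
  have evPhat : ∀ (x : ZMod N → ℝ) (κ : ℕ),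
      MvPolynomial.eval (fun v => ((x v : ℝ) : ℂ)) (Phat N κ) = analyticHat N x κ :=
    fun x κ => eval_Phat N κ x
  have evE1 : ∀ (x : ZMod N → ℝ) (κ : ℕ),
      MvPolynomial.eval (fun v => ((x v : ℝ) : ℂ)) (E1 κ)
        = ∑ s ∈ Finset.Ico 1 B, W s * (ψ m1 ^ s - ψ m2 ^ s) * analyticHat N x (κ + s) := by
    intro x κ
    simp only [hE1, map_sum, MvPolynomial.eval_mul, MvPolynomial.eval_C, eval_Phat]
  have evE2 : ∀ (x : ZMod N → ℝ) (κ : ℕ),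
      MvPolynomial.eval (fun v => ((x v : ℝ) : ℂ)) (E2 κ)
        = ∑ s ∈ Finset.Ico 1 B, W s * (ψ m1 ^ s - ψ m3 ^ s) * analyticHat N x (κ + s) := by
    intro x κ
    simp only [hE2, map_sum, MvPolynomial.eval_mul, MvPolynomial.eval_C, eval_Phat]
  have evE1C : ∀ (x : ZMod N → ℝ) (κ : ℕ),
      MvPolynomial.eval (fun v => ((x v : ℝ) : ℂ)) (E1C κ)
        = (starRingEnd ℂ) (∑ s ∈ Finset.Ico 1 B,
            W s * (ψ m1 ^ s - ψ m2 ^ s) * analyticHat N x (κ + s)) := by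
    intro x κ
    rw [map_sum]
    simp only [hE1C, map_sum, MvPolynomial.eval_mul, MvPolynomial.eval_C, eval_PhatC, map_mul]
  have evE2C : ∀ (x : ZMod N → ℝ) (κ : ℕ),
      MvPolynomial.eval (fun v => ((x v : ℝ) : ℂ)) (E2C κ)
        = (starRingEnd ℂ) (∑ s ∈ Finset.Ico 1 B,
            W s * (ψ m1 ^ s - ψ m3 ^ s) * analyticHat N x (κ + s)) := by
    intro x κ
    rw [map_sum]
    simp only [hE2C, map_sum, MvPolynomial.eval_mul, MvPolynomial.eval_C, eval_PhatC, map_mul]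
  -- witness signals
  set xw : ℕ → (ZMod N → ℝ) := fun j => fun n => Real.cos (2 * Real.pi * (j:ℝ) * ((n.val:ℕ):ℝ) / (N:ℝ)) with hxw
  have hQne : ∀ κ : ℕ, κ < M → Q κ ≠ 0 := by
    intro κ hκ
    apply ne_zero_of_eval N _ (fun v => (((xw (κ+1)) v : ℝ) : ℂ))
    have hhat0 : ∀ s ∈ Finset.Ico 1 B, s ≠ 1 → analyticHat N (xw (κ+1)) (κ + s) = 0 := by
      intro s hs hs1
      have hs' := Finset.mem_Ico.mp hs
      by_cases hsM : κ + s ≤ M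
      · exact hat_cos_zero N hN (κ+1) (κ+s) (by omega) (by omega) (by omega)
      · exact hat_vanish N _ (κ+s) (by omega)
    have h1mem : 1 ∈ Finset.Ico 1 B := Finset.mem_Ico.mpr ⟨le_refl 1, by omega⟩
    have hhne : analyticHat N (xw (κ+1)) (κ + 1) ≠ 0 := hat_cos_ne N hN (κ+1) (by omega)
    set h : ℂ := analyticHat N (xw (κ+1)) (κ + 1) with hh
    have hr12 : ∑ s ∈ Finset.Ico 1 B, W s * (ψ m1 ^ s - ψ m2 ^ s) * analyticHat N (xw (κ+1)) (κ + s)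
        = W 1 * (ψ m1 - ψ m2) * h := by
      rw [Finset.sum_eq_single 1]
      · rw [pow_one, pow_one]
      · intro s hs hs1
        rw [hhat0 s hs hs1, mul_zero]
      · intro hcon
        exact absurd h1mem hcon
    have hr13 : ∑ s ∈ Finset.Ico 1 B, W s * (ψ m1 ^ s - ψ m3 ^ s) * analyticHat N (xw (κ+1)) (κ + s)
        = W 1 * (ψ m1 - ψ m3) * h := by
      rw [Finset.sum_eq_single 1]
      · rw [pow_one, pow_one]
      · intro s hs hs1
        rw [hhat0 s hs hs1, mul_zero]
      · intro hcon
        exact absurd h1mem hcon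
    have hevQ : MvPolynomial.eval (fun v => (((xw (κ+1)) v : ℝ) : ℂ)) (Q κ)
        = (W 1 * (starRingEnd ℂ) (W 1) * (h * (starRingEnd ℂ) h)) *
          ((starRingEnd ℂ) (ψ m1 - ψ m2) * (ψ m1 - ψ m3)
            - (ψ m1 - ψ m2) * (starRingEnd ℂ) (ψ m1 - ψ m3)) := by
      simp only [hQ, map_sub, map_mul]
      rw [evE1, evE2, evE1C, evE2C, hr12, hr13]
      simp only [map_sub, map_mul]
      ring
    rw [hevQ]
    apply mul_ne_zero
    · exact mul_ne_zero (mul_ne_zero hW1 (star_ne_zero.mpr hW1)) (mul_ne_zero hhne (star_ne_zero.mpr hhne))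
    · exact three_unit (ψ m1) (ψ m2) (ψ m3) (habsψ m1) (habsψ m2) (habsψ m3) hψ12 hψ13 hψ23
  have hPne : P ≠ 0 := by
    rw [hP]
    apply mul_ne_zero
    · rw [Finset.prod_ne_zero_iff]
      intro κ hκ
      have hκM : κ ≤ M := by
        have := Finset.mem_range.mp hκ; omega
      apply ne_zero_of_eval N _ (fun v => (((xw κ) v : ℝ) : ℂ))
      rw [evPhat (xw κ) κ]
      exact hat_cos_ne N hN κ hκM
    · rw [Finset.prod_ne_zero_iff]
      intro κ hκ
      exact hQne κ (Finset.mem_range.mp hκ)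
  refine ⟨P, hPne, ?_⟩
  intro x hx zt hzt hmeas0 hmeasK
  obtain ⟨xt, rfl⟩ := hzt
  set a : ℕ → ℂ := analyticHat N xt with ha
  set b : ℕ → ℂ := analyticHat N x with hb
  -- generic conditions
  rw [hP, map_mul, map_prod, map_prod] at hx
  obtain ⟨hx1, hx2⟩ := mul_ne_zero_iff.mp hx
  have hbne : ∀ κ : ℕ, κ ≤ M → b κ ≠ 0 := by
    intro κ hκ
    have := Finset.prod_ne_zero_iff.mp hx1 κ (Finset.mem_range.mpr (by omega))
    rwa [evPhat x κ] at this
  set r : ℤ → ℕ → ℂ := fun m κ => ∑ s ∈ Finset.Ico 1 B, W s * ψ m ^ s * b (κ+s) with hr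
  have hrsub12 : ∀ κ : ℕ, r m1 κ - r m2 κ
      = ∑ s ∈ Finset.Ico 1 B, W s * (ψ m1 ^ s - ψ m2 ^ s) * b (κ + s) := by
    intro κ
    rw [← Finset.sum_sub_distrib]
    exact Finset.sum_congr rfl (fun s _ => by ring)
  have hrsub13 : ∀ κ : ℕ, r m1 κ - r m3 κ
      = ∑ s ∈ Finset.Ico 1 B, W s * (ψ m1 ^ s - ψ m3 ^ s) * b (κ + s) := by
    intro κ
    rw [← Finset.sum_sub_distrib]
    exact Finset.sum_congr rfl (fun s _ => by ring)
  have hQx : ∀ κ : ℕ, κ < M →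
      (starRingEnd ℂ) (r m1 κ - r m2 κ) * (r m1 κ - r m3 κ)
        - (r m1 κ - r m2 κ) * (starRingEnd ℂ) (r m1 κ - r m3 κ) ≠ 0 := by
    intro κ hκ
    have hQv := Finset.prod_ne_zero_iff.mp hx2 κ (Finset.mem_range.mpr hκ)
    rw [hQ] at hQv
    simp only [map_sub, map_mul] at hQv
    rw [evE1 x κ, evE2 x κ, evE1C x κ, evE2C x κ] at hQv
    rw [hrsub12, hrsub13]
    exact fun hcon => hQv (by rw [← sub_eq_zero] at hcon ⊢; linear_combination hcon)
  -- measurement machinery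
  set S : ℤ → ℕ → (ℕ → ℂ) → ℂ := fun m κ c => ∑ s ∈ Finset.range B, W s * ψ m ^ s * c (κ+s) with hSdef
  have hstft : ∀ (y : ZMod N → ℝ) (κ : ℕ), κ + B ≤ N → ∀ m : ℤ,
      stft w L (analyticSignal y) ((κ:ℤ) - (i + N - B)) m
      = (1/N : ℂ) * eN N ((i + N - B) * (m * L)) * S m κ (analyticHat N y) := by
    intro y κ hκ m
    rw [meas N hN B hB0 hBN w i hzero y L m κ hκ]
  have habsS : ∀ (y : ZMod N → ℝ) (κ : ℕ), κ + B ≤ N → ∀ m : ℤ,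
      ‖stft w L (analyticSignal y) ((κ:ℤ) - (i + N - B)) m‖
      = ‖S m κ (analyticHat N y)‖ / N := by
    intro y κ hκ m
    rw [hstft y κ hκ m, norm_mul, norm_mul, abs_eN, norm_div, norm_one, Complex.norm_natCast]
    ring
  have hNR : (N:ℝ) ≠ 0 := by exact_mod_cast hN.ne'
  -- |a M| = |b M|
  have hSM : ∀ (c : ℕ → ℂ), (∀ j, M < j → c j = 0) → S 0 M c = W 0 * c M := by
    intro c hc
    rw [hSdef]
    simp only
    rw [Finset.sum_eq_single 0]
    · rw [pow_zero, mul_one, Nat.add_zero]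
    · intro s hs hs0
      rw [hc (M + s) (by omega), mul_zero]
    · intro hcon
      exact absurd (Finset.mem_range.mpr hB0) hcon
  have hW0abs : ‖W 0‖ ≠ 0 := fun hcon => hW0 (norm_eq_zero.mp hcon)
  have havan : ∀ j, M < j → a j = 0 := fun j hj => hat_vanish N xt j hj
  have hbvan : ∀ j, M < j → b j = 0 := fun j hj => hat_vanish N x j hj
  have habsM : ‖a M‖ = ‖b M‖ := by
    have h1 := hmeas0
    rw [show (((N / 2 : ℕ) : ℤ)) = ((M:ℕ):ℤ) by rw [hM], habsS xt M (by omega) 0,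
      habsS x M (by omega) 0] at h1
    rw [hSM a havan, hSM b hbvan] at h1
    rw [norm_mul, norm_mul] at h1
    rw [div_left_inj' (by exact_mod_cast hN.ne' : (N:ℝ) ≠ 0)] at h1
    exact mul_left_cancel₀ hW0abs h1
  -- measurements at κ < M
  have hSm : ∀ κ : ℕ, κ < M → ∀ m : ℤ, m = m1 ∨ m = m2 ∨ m = m3 →
      ‖S m κ a‖ = ‖S m κ b‖ := by
    intro κ hκ m hm
    have hmem : m ∈ ({m1, m2, m3} : Set ℤ) := by
      rcases hm with h | h | h <;> simp [h]
    have h1 := hmeasK κ (by omega) m hmem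
    rw [habsS xt κ (by omega) m, habsS x κ (by omega) m] at h1
    field_simp at h1
    exact h1
  -- decomposition of S
  have hdecomp : ∀ (m : ℤ) (κ : ℕ) (c : ℕ → ℂ),
      S m κ c = W 0 * c κ + ∑ s ∈ Finset.Ico 1 B, W s * ψ m ^ s * c (κ + s) := by
    intro m κ c
    rw [hSdef]
    simp only
    rw [Finset.range_eq_Ico, Finset.sum_eq_sum_Ico_succ_bot hB0]
    rw [pow_zero, mul_one, Nat.add_zero]
  -- main induction
  have main : ∀ d : ℕ, d ≤ M → ∃ θ : ℂ, ‖θ‖ = 1 ∧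
      ∀ j : ℕ, M - d ≤ j → a j = θ * b j := by
    intro d
    induction d with
    | zero =>
      intro _
      have hbM : b M ≠ 0 := hbne M le_rfl
      have hbMabs : ‖b M‖ ≠ 0 := fun hcon => hbM (norm_eq_zero.mp hcon)
      refine ⟨a M / b M, ?_, ?_⟩
      · rw [norm_div, habsM]
        field_simp
      · intro j hj
        rcases Nat.lt_or_ge M j with hlt | hge
        · rw [havan j hlt, hbvan j hlt, mul_zero]
        · have hjM : j = M := by omega
          rw [hjM]
          field_simp
    | succ d ih =>
      intro hd
      obtain ⟨θ, hθabs, hθ⟩ := ih (by omega)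
      have hθne : θ ≠ 0 := fun hcon => by rw [hcon] at hθabs; simp at hθabs
      set κ : ℕ := M - (d+1) with hκdef
      have hκM : κ < M := by omega
      have hκ1 : κ + 1 = M - d := by omega
      have htail : ∀ m : ℤ, (∑ s ∈ Finset.Ico 1 B, W s * ψ m ^ s * a (κ + s)) = θ * r m κ := by
        intro m
        rw [hr]
        simp only
        rw [Finset.mul_sum]
        refine Finset.sum_congr rfl (fun s hs => ?_)
        have hs1 := (Finset.mem_Ico.mp hs).1
        rw [hθ (κ + s) (by omega)]
        ring
      have hmeasθ : ∀ m : ℤ, m = m1 ∨ m = m2 ∨ m = m3 →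
          ‖θ⁻¹ * (W 0 * a κ) + r m κ‖ = ‖W 0 * b κ + r m κ‖ := by
        intro m hm
        have h1 := hSm κ hκM m hm
        rw [hdecomp m κ a, hdecomp m κ b, htail m] at h1
        have h2 : W 0 * a κ + θ * r m κ = θ * (θ⁻¹ * (W 0 * a κ) + r m κ) := by
          field_simp
        rw [h2, norm_mul, hθabs, one_mul] at h1
        exact h1
      have hind := hQx κ hκM
      have hcirc := circle_unique (θ⁻¹ * (W 0 * a κ)) (W 0 * b κ) (r m1 κ) (r m2 κ) (r m3 κ)
        (hmeasθ m1 (Or.inl rfl)) (hmeasθ m2 (Or.inr (Or.inl rfl))) (hmeasθ m3 (Or.inr (Or.inr rfl)))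
        hind
      have haκ : a κ = θ * b κ := by
        have h3 : W 0 * a κ = W 0 * (θ * b κ) := by
          have := congrArg (fun z => θ * z) hcirc
          rw [← mul_assoc, mul_inv_cancel₀ hθne, one_mul] at this
          rw [this]
          ring
        exact mul_left_cancel₀ hW0 h3
      refine ⟨θ, hθabs, ?_⟩
      intro j hj
      rcases Nat.lt_or_ge j (M - d) with hlt | hge
      · have : j = κ := by omega
        rw [this]
        exact haκ
      · exact hθ j hge
  -- endgame
  obtain ⟨θ, hθabs, hθ⟩ := main M le_rfl
  have hθall : ∀ j : ℕ, a j = θ * b j := fun j => hθ j (by omega)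
  have hθne : θ ≠ 0 := fun hcon => by rw [hcon] at hθabs; simp at hθabs
  have hb0 : b 0 ≠ 0 := hbne 0 (by omega)
  have hconja : (starRingEnd ℂ) (a 0) = a 0 := by
    rw [ha, hat_zero_real N hN xt, map_sum]
    exact Finset.sum_congr rfl (fun n _ => Complex.conj_ofReal _)
  have hconjb : (starRingEnd ℂ) (b 0) = b 0 := by
    rw [hb, hat_zero_real N hN x, map_sum]
    exact Finset.sum_congr rfl (fun n _ => Complex.conj_ofReal _)
  have hθconj : (starRingEnd ℂ) θ = θ := by
    have h1 : (starRingEnd ℂ) (a 0) = (starRingEnd ℂ) θ * (starRingEnd ℂ) (b 0) := by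
      rw [← map_mul, hθall 0]
    rw [hconja, hconjb, hθall 0] at h1
    exact mul_right_cancel₀ hb0 h1.symm
  have hθsq : θ * θ = 1 := by
    have h1 : θ * (starRingEnd ℂ) θ = ((Complex.normSq θ : ℝ) : ℂ) := Complex.mul_conj θ
    rw [hθconj] at h1
    rw [h1, Complex.normSq_eq_norm_sq, hθabs]
    norm_num
  have hθpm : θ = 1 ∨ θ = -1 := by
    have h1 : (θ - 1) * (θ + 1) = 0 := by linear_combination hθsq
    rcases mul_eq_zero.mp h1 with h | h
    · left; linear_combination h
    · right; linear_combination h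
  have hfun : analyticSignal xt = fun n => θ * analyticSignal x n := by
    funext n
    unfold analyticSignal
    have h1 : ∀ k ∈ Finset.range N, analyticHat N xt k *
        Complex.exp (2 * π * I * (k:ℂ) * ((n.val:ℕ):ℂ) / N)
        = θ * (analyticHat N x k * Complex.exp (2 * π * I * (k:ℂ) * ((n.val:ℕ):ℂ) / N)) := by
      intro k _
      rw [show analyticHat N xt k = a k from rfl, hθall k]
      rw [show analyticHat N x k = b k from rfl]
      ring
    rw [Finset.sum_congr rfl h1, ← Finset.mul_sum]
    ring
  rcases hθpm with h | h
  · left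
    rw [hfun, h]
    funext n
    simp
  · right
    rw [hfun, h]
    funext n
    simp
end

section
/- Let N be a positive even integer, let L be an integer with 0 < L < N and ⌈N/L⌉ ≥ 3, set ω = exp(2πi·L/N), and let m1, m2, m3 be pairwise distinct integers with 0 ≤ m_j ≤ ⌈N/L⌉ − 1. Let z, z̃ ∈ ℂ^N be analytic signals whose DFTs satisfy ẑ_{N/2} ≠ 0, ẑ_{N/2−1} ≠ 0, (z̃)^_{N/2} ≠ 0, (z̃)^_{N/2−1} ≠ 0, and |(z̃)^_{N/2}| ≠ |ẑ_{N/2}|. Let w ∈ ℂ^N be an analytic window with ŵ_0·ŵ_1 ≠ 0. If z and z̃ have the same STFT magnitudes at (N/2 − 1, m_j) for j = 1, 2, 3, i.e. |ŷ^w_{N/2−1, m_j}(z̃)| = |ŷ^w_{N/2−1, m_j}(z)| for j = 1, 2, 3, then ((z̃)^_{N/2})² · |ŵ_1|² = (ŵ_0)² · |ẑ_{N/2−1}|². -/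
open Complex

lemma two_pi_I_ne_zero' : 2 * (Real.pi:ℂ) * Complex.I ≠ 0 := by
  have hπ : (Real.pi:ℂ) ≠ 0 := by exact_mod_cast Real.pi_ne_zero
  simp [hπ, Complex.I_ne_zero]

lemma expsum (N : ℕ) (hN : 0 < N) (d : ℤ) :
    ∑ n ∈ Finset.range N, Complex.exp (2 * (Real.pi:ℂ) * Complex.I * d * n / N) =
      if (N:ℤ) ∣ d then (N:ℂ) else 0 := by
  have hNC : (N:ℂ) ≠ 0 := Nat.cast_ne_zero.2 hN.ne'
  set ζ : ℂ := Complex.exp (2 * (Real.pi:ℂ) * Complex.I * d / N) with hζ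
  have hterm : ∀ n ∈ Finset.range N,
      Complex.exp (2 * (Real.pi:ℂ) * Complex.I * d * n / N) = ζ ^ n := by
    intro n _
    rw [hζ, ← Complex.exp_nat_mul]
    congr 1
    ring
  rw [Finset.sum_congr rfl hterm]
  by_cases hdvd : (N:ℤ) ∣ d
  · obtain ⟨c, hc⟩ := hdvd
    have hζ1 : ζ = 1 := by
      rw [hζ]
      have : 2 * (Real.pi:ℂ) * Complex.I * d / N = (c:ℤ) * (2 * (Real.pi:ℂ) * Complex.I) := by
        have : (d:ℂ) = (N:ℂ) * c := by exact_mod_cast congrArg (Int.cast : ℤ → ℂ) hc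
        rw [this]; field_simp
      rw [this, Complex.exp_int_mul_two_pi_mul_I]
    rw [if_pos ⟨c, hc⟩]
    simp [hζ1]
  · rw [if_neg hdvd]
    have hζN : ζ ^ N = 1 := by
      rw [hζ, ← Complex.exp_nat_mul]
      have : (N:ℂ) * (2 * (Real.pi:ℂ) * Complex.I * d / N) = (d:ℤ) * (2 * (Real.pi:ℂ) * Complex.I) := by
        field_simp
      rw [this, Complex.exp_int_mul_two_pi_mul_I]
    have hζne : ζ ≠ 1 := by
      intro h1
      rw [hζ, Complex.exp_eq_one_iff] at h1
      obtain ⟨n, hn⟩ := h1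
      apply hdvd
      refine ⟨n, ?_⟩
      have : (d:ℂ) = (N:ℂ) * n := by
        apply mul_left_cancel₀ two_pi_I_ne_zero'
        field_simp at hn
        linear_combination (2 * (Real.pi:ℂ) * Complex.I) * hn
      exact_mod_cast this
    rw [geom_sum_eq hζne, hζN]
    simp

lemma int_eq_zero_of_range (N : ℕ) (hN : 0 < N) (d c : ℤ) (h1 : -(N:ℤ) < d) (h2 : d < N)
    (hc : d = (N:ℤ) * c) : d = 0 := by
  have hN' : (0:ℤ) < N := by exact_mod_cast hN
  rcases lt_trichotomy c 0 with h'|h'|h'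
  · have h3 : (N:ℤ)*c ≤ -N := by nlinarith
    linarith
  · subst h'; simpa using hc
  · have h3 : (N:ℤ) ≤ (N:ℤ)*c := by nlinarith
    linarith
open Complex Finset

lemma dft_analytic (N : ℕ) (hN : 0 < N) (x : ZMod N → ℝ) (l : ZMod N) :
    dft (analyticSignal x) l = analyticHat N x l.val := by
  have : NeZero N := ⟨hN.ne'⟩
  have hNC : (N:ℂ) ≠ 0 := Nat.cast_ne_zero.2 hN.ne'
  have hl : l.val < N := ZMod.val_lt l
  unfold dft analyticSignal
  have hval : ∀ n ∈ Finset.range N, ((n:ZMod N)).val = n := fun n hn => by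
    rw [ZMod.val_natCast, Nat.mod_eq_of_lt (Finset.mem_range.1 hn)]
  trans (∑ n ∈ Finset.range N, ∑ k ∈ Finset.range N, (1/(N:ℂ)) *
      (analyticHat N x k *
        Complex.exp (2 * (Real.pi:ℂ) * Complex.I * (((k:ℤ) - (l.val:ℤ)):ℂ) * n / N)))
  · refine Finset.sum_congr rfl fun n hn => ?_
    rw [hval n hn, mul_assoc, Finset.sum_mul, Finset.mul_sum]
    refine Finset.sum_congr rfl fun k hk => ?_
    rw [mul_assoc, ← Complex.exp_add]
    congr 2
    push_cast
    field_simp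
    ring
  rw [Finset.sum_comm]
  trans (∑ k ∈ Finset.range N, (1/(N:ℂ)) *
      (analyticHat N x k * (if (N:ℤ) ∣ ((k:ℤ)-(l.val:ℤ)) then (N:ℂ) else 0)))
  · refine Finset.sum_congr rfl fun k hk => ?_
    rw [← Finset.mul_sum, ← Finset.mul_sum]
    have h := expsum N hN ((k:ℤ) - (l.val:ℤ))
    push_cast at h ⊢
    rw [h]
  have key : ∀ k ∈ Finset.range N, (1/(N:ℂ)) *
      (analyticHat N x k * (if (N:ℤ) ∣ ((k:ℤ)-(l.val:ℤ)) then (N:ℂ) else 0))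
      = if k = l.val then analyticHat N x k else 0 := by
    intro k hk
    have hkN := Finset.mem_range.1 hk
    by_cases hkl : k = l.val
    · rw [if_pos (by simp [hkl]), if_pos hkl]
      field_simp
    · rw [if_neg ?_, if_neg hkl, mul_zero, mul_zero]
      intro ⟨c, hc⟩
      have := int_eq_zero_of_range N hN _ c (by omega) (by omega) hc
      omega
  rw [Finset.sum_congr rfl key, Finset.sum_ite_eq' (Finset.range N) l.val]
  rw [if_pos (Finset.mem_range.2 hl)]

lemma c_cases (N : ℕ) (hN : 0 < N) (d c : ℤ) (h1 : -(2*(N:ℤ)) < d) (h2 : d < N)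
    (hc : d = (N:ℤ) * c) : d = 0 ∨ d = -(N:ℤ) := by
  have hN' : (0:ℤ) < N := by exact_mod_cast hN
  rcases le_or_gt c (-2) with h'|h'
  · have h3 : (N:ℤ)*c ≤ -(2*N) := by nlinarith
    omega
  rcases le_or_gt 1 c with h''|h''
  · have h3 : (N:ℤ) ≤ (N:ℤ)*c := by nlinarith
    omega
  interval_cases c
  · right; omega
  · left; omega

lemma analyticHat_eq_zero (N : ℕ) (hEven : N % 2 = 0) (x : ZMod N → ℝ) (k : ℕ)
    (hk : N/2 < k) : analyticHat N x k = 0 := by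
  unfold analyticHat
  rw [if_pos hEven, if_neg (by omega), if_neg (by omega), if_neg (by omega)]

lemma exp_congr_mod (N : ℕ) (hN : 0 < N) (q : ℕ) (a b : ℤ) (h : (N:ℤ) ∣ (a - b)) :
    Complex.exp (2*(Real.pi:ℂ)*Complex.I*(q:ℂ)*(a:ℂ)/N)
      = Complex.exp (2*(Real.pi:ℂ)*Complex.I*(q:ℂ)*(b:ℂ)/N) := by
  have hNC : (N:ℂ) ≠ 0 := Nat.cast_ne_zero.2 hN.ne'
  obtain ⟨t, ht⟩ := h
  have ha : (a:ℂ) = (b:ℂ) + (N:ℂ)*(t:ℂ) := by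
    have : a = b + (N:ℤ)*t := by omega
    exact_mod_cast congrArg (Int.cast : ℤ → ℂ) this
  rw [ha]
  have : 2*(Real.pi:ℂ)*Complex.I*(q:ℂ)*((b:ℂ) + (N:ℂ)*(t:ℂ))/N
      = 2*(Real.pi:ℂ)*Complex.I*(q:ℂ)*(b:ℂ)/N + (((q:ℤ)*t : ℤ):ℂ)*(2*(Real.pi:ℂ)*Complex.I) := by
    push_cast
    field_simp
  rw [this, Complex.exp_add, Complex.exp_int_mul_two_pi_mul_I, mul_one]

lemma stft_analytic (N M : ℕ) (hM : 0 < M) (hNM : N = 2*M) (x y : ZMod N → ℝ) (L m : ℤ) :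
    stft (analyticSignal y) L (analyticSignal x) ((M:ℤ) - 1) m
      = (1/(N:ℂ)) * (analyticHat N x (M-1) * analyticHat N y 0
          + analyticHat N x M * analyticHat N y 1
            * Complex.exp (2*(Real.pi:ℂ)*Complex.I*((m*L : ℤ):ℂ)/N)) := by
  have hN : 0 < N := by omega
  have : NeZero N := ⟨hN.ne'⟩
  have hEven : N % 2 = 0 := by omega
  have hNC : (N:ℂ) ≠ 0 := Nat.cast_ne_zero.2 hN.ne'
  have hval : ∀ n ∈ Finset.range N, ((n:ZMod N)).val = n := fun n hn => by
    rw [ZMod.val_natCast, Nat.mod_eq_of_lt (Finset.mem_range.1 hn)]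
  unfold stft analyticSignal
  -- step 1: expand to triple sum
  trans (∑ n ∈ Finset.range N, ∑ p ∈ Finset.range N, ∑ q ∈ Finset.range N,
      (1/(N:ℂ)) * (1/(N:ℂ)) * (analyticHat N x p * analyticHat N y q *
        Complex.exp (2*(Real.pi:ℂ)*Complex.I*(q:ℂ)*((m*L : ℤ):ℂ)/N) *
        Complex.exp (2*(Real.pi:ℂ)*Complex.I*(((p:ℤ) - q - ((M:ℤ)-1)):ℂ) * n / N)))
  · refine Finset.sum_congr rfl fun n hn => ?_
    have hnN := Finset.mem_range.1 hn
    have hwexp : ∀ q ∈ Finset.range N,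
        analyticHat N y q * Complex.exp (2*(Real.pi:ℂ)*Complex.I*(q:ℂ)*((((m*L - (n:ℤ) : ℤ) : ZMod N)).val : ℂ)/N)
          = analyticHat N y q * Complex.exp (2*(Real.pi:ℂ)*Complex.I*(q:ℂ)*(((m*L - (n:ℤ) : ℤ)):ℂ)/N) := by
      intro q hq
      have hcast : ((((((m*L - (n:ℤ) : ℤ) : ZMod N)).val : ℤ)) : ZMod N)
          = ((m*L - (n:ℤ) : ℤ) : ZMod N) := by
        push_cast [ZMod.natCast_val, ZMod.cast_id]
        rfl
      have hdvd : (N:ℤ) ∣ (((((m*L - (n:ℤ) : ℤ) : ZMod N)).val : ℤ) - (m*L - (n:ℤ))) := by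
        rw [← ZMod.intCast_zmod_eq_zero_iff_dvd]
        push_cast
        rw [sub_eq_zero]
        exact_mod_cast hcast
      have h := exp_congr_mod N hN q _ _ hdvd
      push_cast at h ⊢
      rw [h]
    rw [hval n hn, Finset.sum_congr rfl hwexp]
    trans ((1/(N:ℂ)) * (1/(N:ℂ)) *
      ((∑ p ∈ Finset.range N, analyticHat N x p *
          Complex.exp (2*(Real.pi:ℂ)*Complex.I*(p:ℂ)*(n:ℂ)/N)) *
       (∑ q ∈ Finset.range N, analyticHat N y q *
          Complex.exp (2*(Real.pi:ℂ)*Complex.I*(q:ℂ)*(((m*L - (n:ℤ) : ℤ)):ℂ)/N)) *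
       Complex.exp (-2*(Real.pi:ℂ)*Complex.I*((((M:ℤ)-1) : ℤ):ℂ)*(n:ℂ)/N)))
    · ring
    rw [Finset.sum_mul_sum]
    rw [Finset.sum_mul, Finset.mul_sum]
    refine Finset.sum_congr rfl fun p hp => ?_
    rw [Finset.sum_mul, Finset.mul_sum]
    refine Finset.sum_congr rfl fun q hq => ?_
    trans ((1/(N:ℂ))*(1/(N:ℂ)) * (analyticHat N x p * analyticHat N y q) *
      Complex.exp ((2*(Real.pi:ℂ)*Complex.I*(p:ℂ)*(n:ℂ)/N)
        + (2*(Real.pi:ℂ)*Complex.I*(q:ℂ)*(((m*L - (n:ℤ) : ℤ)):ℂ)/N)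
        + (-2*(Real.pi:ℂ)*Complex.I*((((M:ℤ)-1) : ℤ):ℂ)*(n:ℂ)/N)))
    · rw [Complex.exp_add, Complex.exp_add]; ring
    · have harg : (2*(Real.pi:ℂ)*Complex.I*(p:ℂ)*(n:ℂ)/N)
        + (2*(Real.pi:ℂ)*Complex.I*(q:ℂ)*(((m*L - (n:ℤ) : ℤ)):ℂ)/N)
        + (-2*(Real.pi:ℂ)*Complex.I*((((M:ℤ)-1) : ℤ):ℂ)*(n:ℂ)/N)
          = (2*(Real.pi:ℂ)*Complex.I*(q:ℂ)*((m*L : ℤ):ℂ)/N)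
            + (2*(Real.pi:ℂ)*Complex.I*(((p:ℤ) - q - ((M:ℤ)-1)):ℂ) * n / N) := by
        push_cast
        field_simp
        ring
      rw [harg, Complex.exp_add]; ring
  -- step 2: swap sums and evaluate inner geometric sums
  rw [Finset.sum_comm]
  rw [Finset.sum_congr rfl (fun p _ => Finset.sum_comm)]
  have hinner : ∀ p ∈ Finset.range N, ∀ q ∈ Finset.range N,
      ∑ n ∈ Finset.range N, (1/(N:ℂ)) * (1/(N:ℂ)) * (analyticHat N x p * analyticHat N y q *
        Complex.exp (2*(Real.pi:ℂ)*Complex.I*(q:ℂ)*((m*L : ℤ):ℂ)/N) *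
        Complex.exp (2*(Real.pi:ℂ)*Complex.I*(((p:ℤ) - q - ((M:ℤ)-1)):ℂ) * n / N))
      = (1/(N:ℂ)) * (1/(N:ℂ)) * (analyticHat N x p * analyticHat N y q *
        Complex.exp (2*(Real.pi:ℂ)*Complex.I*(q:ℂ)*((m*L : ℤ):ℂ)/N) *
        (if (N:ℤ) ∣ ((p:ℤ) - q - ((M:ℤ)-1)) then (N:ℂ) else 0)) := by
    intro p _ q _
    rw [← Finset.mul_sum, ← Finset.mul_sum]
    congr 2
    have h := expsum N hN ((p:ℤ) - q - ((M:ℤ)-1))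
    push_cast at h ⊢
    rw [h]
  rw [Finset.sum_congr rfl (fun p hp => Finset.sum_congr rfl (fun q hq => hinner p hp q hq))]
  -- step 3: collapse the double sum to two terms
  rw [← Finset.sum_product']
  set F : ℕ × ℕ → ℂ := fun pq => (1/(N:ℂ)) * (1/(N:ℂ)) * (analyticHat N x pq.1 * analyticHat N y pq.2 *
        Complex.exp (2*(Real.pi:ℂ)*Complex.I*(pq.2:ℂ)*((m*L : ℤ):ℂ)/N) *
        (if (N:ℤ) ∣ ((pq.1:ℤ) - pq.2 - ((M:ℤ)-1)) then (N:ℂ) else 0)) with hF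
  have hsub : ({(M-1,0),(M,1)} : Finset (ℕ × ℕ)) ⊆ Finset.range N ×ˢ Finset.range N := by
    intro pq hpq
    simp only [Finset.mem_insert, Finset.mem_singleton] at hpq
    rcases hpq with h|h <;> subst h <;> simp [Finset.mem_product] <;> omega
  have hzero : ∀ pq ∈ Finset.range N ×ˢ Finset.range N,
      pq ∉ ({(M-1,0),(M,1)} : Finset (ℕ × ℕ)) → F pq = 0 := by
    rintro ⟨p, q⟩ hpq hnot
    simp only [Finset.mem_product, Finset.mem_range] at hpq
    simp only [Finset.mem_insert, Finset.mem_singleton, Prod.mk.injEq, not_or, not_and] at hnot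
    obtain ⟨hpN, hqN⟩ := hpq
    rw [hF]
    simp only []
    by_cases hdvd : (N:ℤ) ∣ ((p:ℤ) - q - ((M:ℤ)-1))
    · obtain ⟨c, hc⟩ := hdvd
      have hcases := c_cases N hN _ c (by push_cast; omega) (by push_cast; omega) hc
      rcases hcases with h0|hmN
      · have hpq' : (p:ℤ) = q + M - 1 := by omega
        rcases Nat.lt_or_ge q 2 with hq2|hq2
        · interval_cases q
          · exact absurd rfl (hnot.1 (by omega))
          · exact absurd rfl (hnot.2 (by omega))
        · have hp2 : N/2 < p := by omega
          rw [analyticHat_eq_zero N hEven x p hp2]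
          ring
      · have hq2 : N/2 < q := by omega
        rw [analyticHat_eq_zero N hEven y q hq2]
        ring
    · rw [if_neg hdvd]
      ring
  rw [← Finset.sum_subset hsub hzero]
  have hne : ((M-1 : ℕ), (0:ℕ)) ≠ ((M:ℕ), (1:ℕ)) := by simp
  rw [Finset.sum_pair hne]
  have hd1 : (N:ℤ) ∣ ((((M-1:ℕ)):ℤ) - (((0:ℕ)):ℤ) - ((M:ℤ)-1)) := ⟨0, by push_cast; omega⟩
  have hd2 : (N:ℤ) ∣ ((((M:ℕ)):ℤ) - (((1:ℕ)):ℤ) - ((M:ℤ)-1)) := ⟨0, by push_cast; omega⟩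
  rw [hF]
  simp only []
  rw [if_pos hd1, if_pos hd2]
  have hE0 : Complex.exp (2*(Real.pi:ℂ)*Complex.I*(((0:ℕ)):ℂ)*((m*L : ℤ):ℂ)/N) = 1 := by
    norm_num
  have hE1 : Complex.exp (2*(Real.pi:ℂ)*Complex.I*(((1:ℕ)):ℂ)*((m*L : ℤ):ℂ)/N)
      = Complex.exp (2*(Real.pi:ℂ)*Complex.I*((m*L : ℤ):ℂ)/N) := by
    congr 1
    push_cast
    ring
  rw [hE0, hE1]
  field_simp

lemma analyticHat_zero_real (N : ℕ) (hN : 0 < N) (x : ZMod N → ℝ) :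
    ∃ r : ℝ, analyticHat N x 0 = (r:ℂ) := by
  have : NeZero N := ⟨hN.ne'⟩
  have h0 : analyticHat N x 0 = dft (fun n => (x n : ℂ)) 0 := by
    unfold analyticHat
    by_cases h : N % 2 = 0 <;> simp [h]
  refine ⟨∑ n ∈ Finset.range N, x n, ?_⟩
  rw [h0]
  unfold dft
  rw [ZMod.val_zero]
  push_cast
  refine Finset.sum_congr rfl fun n hn => ?_
  norm_num

lemma analyticHat_half_real (N M : ℕ) (hM : 0 < M) (hNM : N = 2*M) (x : ZMod N → ℝ) :
    ∃ r : ℝ, analyticHat N x M = (r:ℂ) := by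
  have hN : 0 < N := by omega
  have : NeZero N := ⟨hN.ne'⟩
  have hNC : (N:ℂ) ≠ 0 := Nat.cast_ne_zero.2 hN.ne'
  have hMC : (M:ℂ) ≠ 0 := Nat.cast_ne_zero.2 hM.ne'
  have hM2 : M = N / 2 := by omega
  have h0 : analyticHat N x M = dft (fun n => (x n : ℂ)) ((N/2 : ℕ) : ZMod N) := by
    unfold analyticHat
    rw [if_pos (by omega), if_neg (by omega), if_neg (by omega), if_pos hM2]
  refine ⟨∑ n ∈ Finset.range N, x n * (-1:ℝ)^n, ?_⟩
  rw [h0]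
  unfold dft
  have hval : (((N/2 : ℕ) : ZMod N)).val = M := by
    rw [ZMod.val_natCast, ← hM2, Nat.mod_eq_of_lt (by omega)]
  rw [hval]
  push_cast
  refine Finset.sum_congr rfl fun n hn => ?_
  have hexp : Complex.exp (-2*(Real.pi:ℂ)*Complex.I*(M:ℂ)*(n:ℂ)/N) = (-1:ℂ)^n := by
    have harg : -2*(Real.pi:ℂ)*Complex.I*(M:ℂ)*(n:ℂ)/N
        = (-((n:ℕ):ℂ))*(2*(Real.pi:ℂ)*Complex.I) + ((n:ℕ):ℂ)*((Real.pi:ℂ)*Complex.I) := by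
      rw [hNM]
      push_cast
      field_simp
      ring
    have hone : Complex.exp (-((n:ℕ):ℂ) * (2*(Real.pi:ℂ)*Complex.I)) = 1 := by
      have h := Complex.exp_int_mul_two_pi_mul_I (-(n:ℤ))
      push_cast at h
      exact h
    rw [harg, Complex.exp_add, hone, one_mul, Complex.exp_nat_mul, Complex.exp_pi_mul_I]
  rw [hexp]

lemma exp_inj' (N : ℕ) (hN : 0 < N) (s t : ℤ)
    (h : Complex.exp (2*(Real.pi:ℂ)*Complex.I*((s:ℤ):ℂ)/N)
       = Complex.exp (2*(Real.pi:ℂ)*Complex.I*((t:ℤ):ℂ)/N)) : (N:ℤ) ∣ (s - t) := by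
  have hNC : (N:ℂ) ≠ 0 := Nat.cast_ne_zero.2 hN.ne'
  rw [Complex.exp_eq_exp_iff_exists_int] at h
  obtain ⟨k, hk⟩ := h
  refine ⟨k, ?_⟩
  have h2 : (s:ℂ) - t = N * k := by
    apply mul_left_cancel₀ two_pi_I_ne_zero'
    field_simp at hk
    linear_combination (2 * (Real.pi:ℂ) * Complex.I) * hk
  exact_mod_cast h2

lemma quad_zero (u1 u2 u3 E K C : ℂ) (h12 : u1 ≠ u2) (h13 : u1 ≠ u3) (h23 : u2 ≠ u3)
    (e1 : E*u1^2 + K*u1 + C = 0) (e2 : E*u2^2 + K*u2 + C = 0)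
    (e3 : E*u3^2 + K*u3 + C = 0) : E = 0 ∧ K = 0 := by
  have g12 : (u1 - u2) * (E*(u1+u2) + K) = 0 := by linear_combination e1 - e2
  have g13 : (u1 - u3) * (E*(u1+u3) + K) = 0 := by linear_combination e1 - e3
  have f12 : E*(u1+u2) + K = 0 :=
    (mul_eq_zero.1 g12).resolve_left (sub_ne_zero.2 h12)
  have f13 : E*(u1+u3) + K = 0 :=
    (mul_eq_zero.1 g13).resolve_left (sub_ne_zero.2 h13)
  have g23 : (u2 - u3) * E = 0 := by linear_combination f12 - f13
  have hE : E = 0 := (mul_eq_zero.1 g23).resolve_left (sub_ne_zero.2 h23)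
  exact ⟨hE, by linear_combination f12 - (u1+u2)*hE⟩

lemma magnitude_constraint (a b c d u1 u2 u3 : ℂ)
    (hu1 : u1 * (starRingEnd ℂ) u1 = 1) (hu2 : u2 * (starRingEnd ℂ) u2 = 1)
    (hu3 : u3 * (starRingEnd ℂ) u3 = 1)
    (h12 : u1 ≠ u2) (h13 : u1 ≠ u3) (h23 : u2 ≠ u3)
    (e1 : ‖a + b*u1‖ = ‖c + d*u1‖)
    (e2 : ‖a + b*u2‖ = ‖c + d*u2‖)
    (e3 : ‖a + b*u3‖ = ‖c + d*u3‖) :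
    (starRingEnd ℂ) a * b = (starRingEnd ℂ) c * d ∧
    a * (starRingEnd ℂ) a + b * (starRingEnd ℂ) b
      = c * (starRingEnd ℂ) c + d * (starRingEnd ℂ) d := by
  have hsq : ∀ z w : ℂ, ‖z‖ = ‖w‖ →
      z * (starRingEnd ℂ) z = w * (starRingEnd ℂ) w := by
    intro z w h
    rw [Complex.mul_conj, Complex.mul_conj, Complex.normSq_eq_norm_sq, Complex.normSq_eq_norm_sq, h]
  have key : ∀ v : ℂ, v * (starRingEnd ℂ) v = 1 →
      ‖a + b*v‖ = ‖c + d*v‖ →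
      ((starRingEnd ℂ) a * b - (starRingEnd ℂ) c * d) * v^2
        + (a * (starRingEnd ℂ) a + b * (starRingEnd ℂ) b
            - c * (starRingEnd ℂ) c - d * (starRingEnd ℂ) d) * v
        + (a * (starRingEnd ℂ) b - c * (starRingEnd ℂ) d) = 0 := by
    intro v hv he
    have h := hsq _ _ he
    simp only [map_add, map_mul] at h
    linear_combination v * h - (a * (starRingEnd ℂ) b - c * (starRingEnd ℂ) d
      + (b * (starRingEnd ℂ) b - d * (starRingEnd ℂ) d) * v) * hv
  have q := quad_zero u1 u2 u3 _ _ _ h12 h13 h23 (key u1 hu1 e1) (key u2 hu2 e2) (key u3 hu3 e3)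
  exact ⟨by linear_combination q.1, by linear_combination q.2⟩
/-- Lemma `k` of the paper: if two analytic signals with
`|(z̃)^_{N/2}| ≠ |ẑ_{N/2}|` share the three STFT magnitudes at `(N/2−1, m_j)`
for an analytic window, then `((z̃)^_{N/2})²·|ŵ_1|² = (ŵ_0)²·|ẑ_{N/2−1}|²`. -/
theorem ambiguity_constraint_analytic_window (N : ℕ) (hN : 0 < N) (hEven : N % 2 = 0)
    (L : ℤ) (hL0 : 0 < L) (hLN : L < (N : ℤ)) (hceil : 3 ≤ ⌈(N : ℚ) / (L : ℚ)⌉)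
    (m1 m2 m3 : ℤ)
    (hm1 : 0 ≤ m1) (hm1' : m1 ≤ ⌈(N : ℚ) / (L : ℚ)⌉ - 1)
    (hm2 : 0 ≤ m2) (hm2' : m2 ≤ ⌈(N : ℚ) / (L : ℚ)⌉ - 1)
    (hm3 : 0 ≤ m3) (hm3' : m3 ≤ ⌈(N : ℚ) / (L : ℚ)⌉ - 1)
    (h12 : m1 ≠ m2) (h13 : m1 ≠ m3) (h23 : m2 ≠ m3)
    (z zt : ZMod N → ℂ) (hz : IsAnalytic z) (hzt : IsAnalytic zt)
    (hz1 : dft z ((N / 2 : ℕ) : ZMod N) ≠ 0)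
    (hz2 : dft z (((N / 2 : ℕ) : ZMod N) - 1) ≠ 0)
    (hzt1 : dft zt ((N / 2 : ℕ) : ZMod N) ≠ 0)
    (hzt2 : dft zt (((N / 2 : ℕ) : ZMod N) - 1) ≠ 0)
    (habs : norm (dft zt ((N / 2 : ℕ) : ZMod N)) ≠
      norm (dft z ((N / 2 : ℕ) : ZMod N)))
    (w : ZMod N → ℂ) (hw : IsAnalytic w) (hw01 : dft w 0 * dft w 1 ≠ 0)
    (hmeas : ∀ m ∈ ({m1, m2, m3} : Set ℤ),
      norm (stft w L zt (((N / 2 : ℕ) : ℤ) - 1) m) =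
        norm (stft w L z (((N / 2 : ℕ) : ℤ) - 1) m)) :
    (dft zt ((N / 2 : ℕ) : ZMod N)) ^ 2 * ((norm (dft w 1) ^ 2 : ℝ) : ℂ) =
      (dft w 0) ^ 2 * ((norm (dft z (((N / 2 : ℕ) : ZMod N) - 1)) ^ 2 : ℝ) : ℂ) := by
  obtain ⟨x, hx⟩ := hz
  obtain ⟨xt, hxt⟩ := hzt
  obtain ⟨y, hy⟩ := hw
  subst hx; subst hxt; subst hy
  have hM : 0 < N / 2 := by omega
  set M := N / 2 with hMdef
  have hNM : N = 2 * M := by omega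
  have : NeZero N := ⟨hN.ne'⟩
  haveI : Fact (1 < N) := ⟨by omega⟩
  have hNC : (N:ℂ) ≠ 0 := Nat.cast_ne_zero.2 hN.ne'
  -- dft evaluations
  have hvalM : (((M:ℕ)) : ZMod N).val = M := by
    rw [ZMod.val_natCast, Nat.mod_eq_of_lt (by omega)]
  have hsub1 : ((M : ℕ) : ZMod N) - 1 = ((M - 1 : ℕ) : ZMod N) := by
    have h' : ((M - 1 : ℕ) : ZMod N) + 1 = ((M : ℕ) : ZMod N) := by
      have hM1 : (M - 1 + 1 : ℕ) = M := by omega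
      rw [← hM1]
      push_cast
      ring
    rw [← h']
    ring
  have hvalM1 : ((((M:ℕ)) : ZMod N) - 1).val = M - 1 := by
    rw [hsub1, ZMod.val_natCast, Nat.mod_eq_of_lt (by omega)]
  have hdz : dft (analyticSignal x) ((M : ℕ) : ZMod N) = analyticHat N x M := by
    rw [dft_analytic N hN, hvalM]
  have hdzt : dft (analyticSignal xt) ((M : ℕ) : ZMod N) = analyticHat N xt M := by
    rw [dft_analytic N hN, hvalM]
  have hdz1 : dft (analyticSignal x) (((M:ℕ):ZMod N) - 1) = analyticHat N x (M-1) := by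
    rw [dft_analytic N hN, hvalM1]
  have hdzt1 : dft (analyticSignal xt) (((M:ℕ):ZMod N) - 1) = analyticHat N xt (M-1) := by
    rw [dft_analytic N hN, hvalM1]
  have hdw0 : dft (analyticSignal y) 0 = analyticHat N y 0 := by
    rw [dft_analytic N hN, ZMod.val_zero]
  have hdw1 : dft (analyticSignal y) 1 = analyticHat N y 1 := by
    rw [dft_analytic N hN, ZMod.val_one]
  rw [hdzt] at hzt1 habs
  rw [hdz] at hz1 habs
  rw [hdz1] at hz2
  rw [hdzt1] at hzt2
  rw [hdw0, hdw1] at hw01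
  rw [hdzt, hdw1, hdw0, hdz1]
  -- measurement identities
  set u : ℤ → ℂ := fun m => Complex.exp (2*(Real.pi:ℂ)*Complex.I*((m*L : ℤ):ℂ)/N) with hu
  have hmeas' : ∀ m : ℤ, m ∈ ({m1, m2, m3} : Set ℤ) →
      ‖analyticHat N xt (M-1) * analyticHat N y 0
          + (analyticHat N xt M * analyticHat N y 1) * u m‖
      = ‖analyticHat N x (M-1) * analyticHat N y 0
          + (analyticHat N x M * analyticHat N y 1) * u m‖ := by
    intro m hm
    have h := hmeas m hm
    rw [stft_analytic N M hM hNM x y L m, stft_analytic N M hM hNM xt y L m] at h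
    rw [norm_mul, norm_mul] at h
    have h1N : (1/(N:ℂ)) ≠ 0 := one_div_ne_zero hNC
    have h2 := mul_left_cancel₀ (norm_ne_zero_iff.2 h1N) h
    simp only [hu]
    exact h2
  -- u values are on the unit circle
  have huu : ∀ m : ℤ, u m * (starRingEnd ℂ) (u m) = 1 := by
    intro m
    have habs1 : ‖u m‖ = 1 := by
      simp only [hu]
      have harg : 2*(Real.pi:ℂ)*Complex.I*((m*L : ℤ):ℂ)/N
          = (((2*Real.pi*((m*L:ℤ):ℝ)/N) : ℝ):ℂ)*Complex.I := by
        push_cast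
        ring
      rw [harg, Complex.norm_exp_ofReal_mul_I]
    rw [Complex.mul_conj, Complex.normSq_eq_norm_sq, habs1]
    norm_num
  -- distinctness of the u values
  have hCL : (⌈(N:ℚ)/(L:ℚ)⌉ - 1) * L < (N:ℤ) := by
    have hL0' : (0:ℚ) < (L:ℚ) := by exact_mod_cast hL0
    have hceil1 : ((⌈(N:ℚ)/(L:ℚ)⌉ : ℤ):ℚ) < (N:ℚ)/(L:ℚ) + 1 := Int.ceil_lt_add_one _
    have h' : ((⌈(N:ℚ)/(L:ℚ)⌉ : ℤ):ℚ) - 1 < (N:ℚ)/(L:ℚ) := by linarith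
    have h'' : (((⌈(N:ℚ)/(L:ℚ)⌉ : ℤ):ℚ) - 1) * L < (N:ℚ) := by
      calc (((⌈(N:ℚ)/(L:ℚ)⌉ : ℤ):ℚ) - 1) * L < ((N:ℚ)/(L:ℚ)) * L :=
            mul_lt_mul_of_pos_right h' hL0'
        _ = (N:ℚ) := div_mul_cancel₀ _ (ne_of_gt hL0')
    exact_mod_cast h''
  have key_ne : ∀ mj mk : ℤ, 0 ≤ mj → mj ≤ ⌈(N:ℚ)/(L:ℚ)⌉ - 1 → 0 ≤ mk →
      mk ≤ ⌈(N:ℚ)/(L:ℚ)⌉ - 1 → mj ≠ mk → u mj ≠ u mk := by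
    intro mj mk hj hj' hk hk' hne hEq
    simp only [hu] at hEq
    obtain ⟨c, hc⟩ := exp_inj' N hN (mj*L) (mk*L) hEq
    have hd : (mj - mk)*L = (N:ℤ)*c := by linarith [hc]
    have hC0 : 0 ≤ ⌈(N:ℚ)/(L:ℚ)⌉ - 1 := by omega
    have hub : (mj - mk)*L ≤ (⌈(N:ℚ)/(L:ℚ)⌉ - 1)*L :=
      mul_le_mul_of_nonneg_right (by omega) hL0.le
    have hlb : -((⌈(N:ℚ)/(L:ℚ)⌉ - 1)*L) ≤ (mj - mk)*L := by
      have := mul_le_mul_of_nonneg_right (show -(⌈(N:ℚ)/(L:ℚ)⌉ - 1) ≤ mj - mk by omega) hL0.le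
      linarith [this]
    have hd0 : (mj - mk)*L = 0 :=
      int_eq_zero_of_range N hN _ c (by linarith) (by linarith) hd
    rcases mul_eq_zero.1 hd0 with h'|h'
    · exact hne (by omega)
    · omega
  -- apply the three-point constraint
  obtain ⟨hE, hK⟩ := magnitude_constraint
    (analyticHat N xt (M-1) * analyticHat N y 0) (analyticHat N xt M * analyticHat N y 1)
    (analyticHat N x (M-1) * analyticHat N y 0) (analyticHat N x M * analyticHat N y 1)
    (u m1) (u m2) (u m3) (huu m1) (huu m2) (huu m3)
    (key_ne m1 m2 hm1 hm1' hm2 hm2' h12) (key_ne m1 m3 hm1 hm1' hm3 hm3' h13)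
    (key_ne m2 m3 hm2 hm2' hm3 hm3' h23)
    (hmeas' m1 (by simp)) (hmeas' m2 (by simp)) (hmeas' m3 (by simp))
  -- extract real identities
  have hW0 : analyticHat N y 0 ≠ 0 := left_ne_zero_of_mul hw01
  have hW1 : analyticHat N y 1 ≠ 0 := right_ne_zero_of_mul hw01
  obtain ⟨Ar, hAr⟩ := analyticHat_half_real N M hM hNM x
  obtain ⟨Atr, hAtr⟩ := analyticHat_half_real N M hM hNM xt
  obtain ⟨W0r, hW0r⟩ := analyticHat_zero_real N hN y
  set P := ‖analyticHat N xt (M-1)‖ with hP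
  set Q := ‖analyticHat N xt M‖ with hQ
  set R := ‖analyticHat N x (M-1)‖ with hR
  set S := ‖analyticHat N x M‖ with hS
  set w0 := ‖analyticHat N y 0‖ with hw0
  set w1 := ‖analyticHat N y 1‖ with hw1
  have hw0ne : w0 ≠ 0 := norm_ne_zero_iff.2 hW0
  have hw1ne : w1 ≠ 0 := norm_ne_zero_iff.2 hW1
  have hE' : P * w0 * (Q * w1) = R * w0 * (S * w1) := by
    have h := congrArg (‖·‖) hE
    simpa only [norm_mul, Complex.norm_conj, hP, hQ, hR, hS, hw0, hw1] using h
  have h1 : P * Q = R * S := by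
    apply mul_right_cancel₀ (mul_ne_zero hw0ne hw1ne)
    linear_combination hE'
  have hK' : (P*w0)^2 + (Q*w1)^2 = (R*w0)^2 + (S*w1)^2 := by
    rw [Complex.mul_conj, Complex.mul_conj, Complex.mul_conj, Complex.mul_conj,
      Complex.normSq_eq_norm_sq, Complex.normSq_eq_norm_sq, Complex.normSq_eq_norm_sq,
      Complex.normSq_eq_norm_sq] at hK
    have : (‖analyticHat N xt (M-1) * analyticHat N y 0‖)^2
        + (‖analyticHat N xt M * analyticHat N y 1‖)^2
        = (‖analyticHat N x (M-1) * analyticHat N y 0‖)^2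
        + (‖analyticHat N x M * analyticHat N y 1‖)^2 := by exact_mod_cast hK
    simpa only [norm_mul, hP, hQ, hR, hS, hw0, hw1] using this
  have hQ0 : 0 ≤ Q := norm_nonneg _
  have hS0 : 0 ≤ S := norm_nonneg _
  have hQS2 : Q^2 ≠ S^2 := by
    intro h
    rcases mul_eq_zero.1 (show (Q - S)*(Q + S) = (0:ℝ) by linear_combination h) with h'|h'
    · exact habs (by linarith)
    · exact habs (by linarith)
  have key2 : (Q^2 - S^2) * (R^2*w0^2 - Q^2*w1^2) = 0 := by
    linear_combination (w0^2*(P*Q + R*S)) * h1 - Q^2 * hK'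
  have hfin : R^2*w0^2 - Q^2*w1^2 = 0 := by
    rcases mul_eq_zero.1 key2 with h'|h'
    · exact absurd (by linarith : Q^2 = S^2) hQS2
    · exact h'
  have hQ2 : Q^2 = Atr^2 := by rw [hQ, hAtr, Complex.norm_real, Real.norm_eq_abs, _root_.sq_abs]
  have hw02 : w0^2 = W0r^2 := by rw [hw0, hW0r, Complex.norm_real, Real.norm_eq_abs, _root_.sq_abs]
  have hreal : Atr^2 * w1^2 = W0r^2 * R^2 := by
    rw [← hQ2, ← hw02]
    linarith
  rw [hAtr, hW0r]
  push_cast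
  exact_mod_cast congrArg (fun r : ℝ => (r : ℂ)) hreal
end
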